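/- arXiv:1711.03875 — 6 statements merged into one kernel-verified Lean document; each statement's English description precedes it below -/
import Mathlib

section
/- Let Ω be a Polish space and F the universal completion of its Borel σ-field. Let D ⊆ ℝ^{dT} satisfy the grid condition and let f : Ω × ℝ^{dT} → ℝ ∪ {−∞} be universally measurable with dom f(ω,·) ⊆ D for every ω ∈ Ω. Then for every compact set K ⊆ ℝ^{dT}, the function g(ω) := sup_{x ∈ K} f(ω,x) (with g(ω) = −∞ if D ∩ K = ∅) is F-measurable. -/
open MeasureTheory
open scoped ENNReal

noncomputable section

/-- The universal completion of the σ-algebra on `X`: sets that are `μ`-null-measurable for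
every probability measure `μ`. -/
def univComp (X : Type*) [MeasurableSpace X] : MeasurableSpace X where
  MeasurableSet' s := ∀ μ : Measure X, IsProbabilityMeasure μ → NullMeasurableSet s μ
  measurableSet_empty := fun _ _ => MeasurableSet.empty.nullMeasurableSet
  measurableSet_compl := fun _ hs μ hμ => (hs μ hμ).compl
  measurableSet_iUnion := fun _ hf μ hμ => .iUnion fun i => hf i μ hμ

/-- `ℝ^d`. -/
abbrev Rd (d : ℕ) := EuclideanSpace ℝ (Fin d)

/-- `ℝ^{dT}`, written in `T` blocks of `ℝ^d`. -/
abbrev Vec (d T : ℕ) := Fin T → Rd d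

/-- The grid condition on a set `D ⊆ ℝ^{dT}`. -/
def GridCond {d T : ℕ} (D : Set (Vec d T)) : Prop :=
  ∃ ε : ℝ, 0 < ε ∧ ∀ i : Fin T, ∀ x ∈ D, ∀ y ∈ D, x i ≠ y i → ε ≤ dist (x i) (y i)

lemma finite_of_separated {X : Type*} [MetricSpace X] {K s : Set X} (hK : IsCompact K)
    (hsK : s ⊆ K) {ε : ℝ} (hε : 0 < ε)
    (hsep : ∀ x ∈ s, ∀ y ∈ s, x ≠ y → ε ≤ dist x y) : s.Finite := by
  obtain ⟨t, htfin, htcover⟩ := (Metric.totallyBounded_iff.mp hK.totallyBounded) (ε/2) (by linarith)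
  have hmem : ∀ x : s, ∃ y ∈ t, (x : X) ∈ Metric.ball y (ε/2) := by
    intro x
    have := htcover (hsK x.2)
    simpa using this
  choose c hc hball using hmem
  haveI : Finite t := htfin
  rw [← Set.finite_coe_iff]
  refine Finite.of_injective (fun x : s => (⟨c x, hc x⟩ : t)) ?_
  intro a b hab
  by_contra hne
  have hne' : (a : X) ≠ b := fun h => hne (Subtype.ext h)
  have h1 := hsep a a.2 b b.2 hne'
  have hcc : c a = c b := congrArg Subtype.val hab
  have da := Metric.mem_ball.mp (hball a)
  have db := Metric.mem_ball.mp (hball b)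
  have : dist (a : X) (b : X) < ε := by
    calc dist (a : X) (b : X) ≤ dist (a : X) (c a) + dist (c a) (b : X) := dist_triangle _ _ _
      _ = dist (a : X) (c a) + dist (b : X) (c b) := by rw [hcc, dist_comm (c b) (b : X)]
      _ < ε/2 + ε/2 := add_lt_add da db
      _ = ε := by ring
  linarith

/-- The supremum over a compact set of a universally measurable function with grid-type
domain is universally measurable. -/
theorem sup_over_compact_measurable
    {d T : ℕ} (hd : 1 ≤ d) (hT : 1 ≤ T)
    (Ω : Type*) [MeasurableSpace Ω] [TopologicalSpace Ω] [PolishSpace Ω] [BorelSpace Ω]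
    (D : Set (Vec d T)) (hD : GridCond D)
    (f : Ω → Vec d T → EReal)
    (hnt : ∀ ω x, f ω x ≠ ⊤)
    (hdom : ∀ ω x, x ∉ D → f ω x = ⊥)
    (hmeas : Measurable[univComp (Ω × Vec d T)] fun p : Ω × Vec d T => f p.1 p.2)
    (K : Set (Vec d T)) (hK : IsCompact K) :
    Measurable[univComp Ω] fun ω => ⨆ x ∈ K, f ω x := by
  obtain ⟨ε, hε, hsep⟩ := hD
  have hεsep : ∀ x ∈ D ∩ K, ∀ y ∈ D ∩ K, x ≠ y → ε ≤ dist x y := by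
    intro x hx y hy hxy
    obtain ⟨i, hi⟩ := Function.ne_iff.mp hxy
    exact le_trans (hsep i x hx.1 y hy.1 hi) (dist_le_pi_dist x y i)
  have hfin : (D ∩ K).Finite := finite_of_separated hK Set.inter_subset_right hε hεsep
  have hrw : ∀ ω, (⨆ x ∈ K, f ω x) = ⨆ x : (D ∩ K : Set (Vec d T)), f ω x := by
    intro ω
    apply le_antisymm
    · refine iSup₂_le fun x hx => ?_
      by_cases hxD : x ∈ D
      · exact le_iSup (fun y : (D ∩ K : Set (Vec d T)) => f ω y) ⟨x, hxD, hx⟩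
      · rw [hdom ω x hxD]; exact bot_le
    · exact iSup_le fun x => le_iSup₂ (f := fun y (_ : y ∈ K) => f ω y) (x : Vec d T) x.2.2
  have hsec : ∀ x : Vec d T, Measurable[univComp Ω] fun ω => f ω x := by
    intro x
    have hmx : Measurable (fun ω : Ω => (ω, x)) := measurable_id.prodMk measurable_const
    have key : @Measurable _ _ (univComp Ω) (univComp (Ω × Vec d T)) (fun ω => (ω, x)) := by
      intro s hs μ hμ
      haveI : IsProbabilityMeasure (μ.map fun ω : Ω => (ω, x)) :=
        Measure.isProbabilityMeasure_map hmx.aemeasurable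
      exact (hs (μ.map fun ω : Ω => (ω, x)) this).preimage ⟨hmx, .rfl⟩
    exact hmeas.comp key
  simp_rw [hrw]
  haveI : Countable (D ∩ K : Set (Vec d T)) := hfin.countable
  exact Measurable.iSup fun x : (D ∩ K : Set (Vec d T)) => hsec x


end
end

section
/- In the one-period setting, suppose Ψ : Ω × ℝ^d → ℝ ∪ {−∞} satisfies Assumption 4.1 and the no-arbitrage condition K = {0} holds. Then there exists ĥ ∈ ℝ^d such that inf_{P∈𝔓} E^P[Ψ(ĥ)] = sup_{h∈ℝ^d} inf_{P∈𝔓} E^P[Ψ(h)]. -/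
open MeasureTheory
open scoped ENNReal

noncomputable section

/-- Conversion `EReal → ℝ≥0∞` (the positive part). -/
def EReal.toENN (x : EReal) : ℝ≥0∞ := if x = ⊤ then ⊤ else ENNReal.ofReal x.toReal

/-- The horizon function `f^∞(x) = lim_n sup {(1/δ) f(δ y) : δ > n, |x - y| < 1/n}`. -/
def horizon {E : Type*} [NormedAddCommGroup E] [NormedSpace ℝ E]
    (f : E → EReal) (x : E) : EReal :=
  ⨅ n : ℕ, ⨆ (δ : ℝ) (_ : ((n : ℝ) + 1) < δ) (y : E) (_ : ‖x - y‖ < 1 / ((n : ℝ) + 1)),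
    ((δ⁻¹ : ℝ) : EReal) * f (δ • y)

/-- The expectation `E^P[g] ∈ ℝ ∪ {−∞}` of a function `g` that is bounded above. -/
def eexp {X : Type*} [MeasurableSpace X] (P : Measure X) (g : X → EReal) : EReal :=
  ((∫⁻ x, (g x).toENN ∂P : ℝ≥0∞) : EReal) - ((∫⁻ x, (-(g x)).toENN ∂P : ℝ≥0∞) : EReal)

/-- A set is `𝔖`-polar if it is null for every measure in `𝔖`. -/
def IsPolar {X : Type*} [MeasurableSpace X] (𝔖 : Set (Measure X)) (A : Set X) : Prop :=
  ∀ P ∈ 𝔖, P A = 0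

/-- A property holds `𝔖`-quasi surely if it holds outside an `𝔖`-polar set. -/
def QuasiSure {X : Type*} [MeasurableSpace X] (𝔖 : Set (Measure X)) (p : X → Prop) : Prop :=
  IsPolar 𝔖 {x | ¬ p x}

/-- Assumption 4.1 of the paper on the one-period objective `Ψ`. -/
structure Assump1P {Ω : Type*} [MeasurableSpace Ω] {d : ℕ} (𝔖 : Set (Measure Ω))
    (Ψ : Ω → Rd d → EReal) (C : ℝ) : Prop where
  usc : ∀ ω, UpperSemicontinuous (Ψ ω)
  meas : Measurable fun p : Ω × Rd d => Ψ p.1 p.2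
  noTop : ∀ ω x, Ψ ω x ≠ ⊤
  bdd : ∀ ω x, Ψ ω x ≤ (C : EReal)
  zero : ⊥ < ⨅ P ∈ 𝔖, eexp P fun ω => Ψ ω 0

/-! ### Auxiliary lemmas -/

open Filter Topology

lemma toENN_top : (⊤ : EReal).toENN = ⊤ := if_pos rfl
lemma toENN_bot : (⊥ : EReal).toENN = 0 := by simp [EReal.toENN]
lemma toENN_coe (r : ℝ) : (r : EReal).toENN = ENNReal.ofReal r := by
  simp [EReal.toENN]

lemma toENN_mono : Monotone EReal.toENN := by
  intro x y hxy
  rcases eq_or_ne y ⊤ with rfl | hy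
  · simp [toENN_top]
  rcases eq_or_ne x ⊥ with rfl | hx
  · simp [toENN_bot]
  have hx' : x ≠ ⊤ := (hxy.trans_lt (Ne.lt_top hy)).ne
  simp only [EReal.toENN, if_neg hy, if_neg hx']
  exact ENNReal.ofReal_le_ofReal (EReal.toReal_le_toReal hxy hx hy)

lemma toENN_surj : Function.Surjective EReal.toENN := by
  intro c
  rcases eq_or_ne c ⊤ with rfl | hc
  · exact ⟨⊤, toENN_top⟩
  · exact ⟨(c.toReal : ℝ), by rw [toENN_coe, ENNReal.ofReal_toReal hc]⟩

lemma toENN_cont : Continuous EReal.toENN :=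
  toENN_mono.continuous_of_surjective toENN_surj

lemma csub_antitone (c : ℝ) : Antitone (fun y : EReal => (c : EReal) - y) :=
  fun _ _ h => EReal.sub_le_sub le_rfl h

lemma csub_cont (c : ℝ) : Continuous (fun y : EReal => (c : EReal) - y) := by
  have h1 : Continuous (fun y : EReal => (c : EReal) + y) := by
    rw [continuous_iff_continuousAt]
    intro y
    have := EReal.continuousAt_add (p := ((c : ℝ), y)) (Or.inl (by simp)) (Or.inl (by simp))
    exact this.comp (Continuous.continuousAt (by fun_prop))
  simpa [sub_eq_add_neg, Function.comp_def] using h1.comp (continuous_neg (G := EReal))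

lemma csub_ennreal_antitone (c : ℝ) : Antitone (fun t : ℝ≥0∞ => (c : EReal) - (t : EReal)) :=
  fun _ _ h => EReal.sub_le_sub le_rfl (EReal.coe_ennreal_le_coe_ennreal_iff.2 h)

lemma csub_ennreal_cont (c : ℝ) : Continuous (fun t : ℝ≥0∞ => (c : EReal) - (t : EReal)) :=
  (csub_cont c).comp continuous_coe_ennreal_ereal

lemma csub_ennreal_le (c : ℝ) (t : ℝ≥0∞) : (c : EReal) - (t : EReal) ≤ (c : EReal) := by
  rcases eq_or_ne t ⊤ with rfl | ht
  · rw [EReal.coe_ennreal_top, EReal.sub_top]; exact bot_le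
  · rw [← ENNReal.ofReal_toReal ht, EReal.coe_ennreal_ofReal,
      max_eq_left ENNReal.toReal_nonneg, ← EReal.coe_sub, EReal.coe_le_coe_iff]
    have := ENNReal.toReal_nonneg (a := t)
    linarith

lemma limsup_usc {E : Type*} [TopologicalSpace E] {f : E → EReal} (hf : UpperSemicontinuous f)
    {x : E} {u : ℕ → E} (hu : Tendsto u atTop (𝓝 x)) :
    limsup (fun n => f (u n)) atTop ≤ f x := by
  refine le_of_forall_gt_imp_ge_of_dense (fun y hy => ?_)
  have h1 : ∀ᶠ z in 𝓝 x, f z < y := hf x y hy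
  have h2 : ∀ᶠ n in atTop, f (u n) < y := hu.eventually h1
  exact limsup_le_of_le (by isBoundedDefault) (h2.mono fun n h => h.le)

lemma coe_ennreal_fin {A : ℝ≥0∞} (hA : A ≠ ⊤) : (A : EReal) = ((A.toReal : ℝ) : EReal) := by
  conv_lhs => rw [← ENNReal.ofReal_toReal hA]
  rw [EReal.coe_ennreal_ofReal, max_eq_left ENNReal.toReal_nonneg]

lemma pt_identity {c : ℝ} (hc : 0 ≤ c) {x : EReal} (hx : x ≠ ⊤) (hxc : x ≤ (c : EReal)) :
    x.toENN + ((c : EReal) - x).toENN = ENNReal.ofReal c + (-x).toENN := by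
  induction x with
  | bot =>
      rw [toENN_bot, EReal.coe_sub_bot, toENN_top, EReal.neg_bot, toENN_top]
      simp
  | coe r =>
      rw [← EReal.coe_sub, ← EReal.coe_neg, toENN_coe, toENN_coe, toENN_coe]
      have hrc : r ≤ c := by exact_mod_cast hxc
      rcases le_or_gt 0 r with hr | hr
      · rw [ENNReal.ofReal_of_nonpos (neg_nonpos.2 hr), add_zero,
          ← ENNReal.ofReal_add hr (by linarith)]
        ring_nf
      · rw [ENNReal.ofReal_of_nonpos hr.le, zero_add,
          ← ENNReal.ofReal_add hc (by linarith)]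
        ring_nf
  | top => exact absurd rfl hx

lemma eexp_eq {X : Type*} [MeasurableSpace X] (P : Measure X) [IsProbabilityMeasure P]
    {c : ℝ} {g : X → EReal} (hg : Measurable fun x => (g x).toENN)
    (hc : 0 ≤ c) (hgt : ∀ x, g x ≠ ⊤) (hgb : ∀ x, g x ≤ (c : EReal)) :
    eexp P g = (c : EReal) - ((∫⁻ x, ((c : EReal) - g x).toENN ∂P : ℝ≥0∞) : EReal) := by
  rw [eexp]
  set A := ∫⁻ x, (g x).toENN ∂P with hA_def
  set B := ∫⁻ x, (-(g x)).toENN ∂P with hB_def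
  set D := ∫⁻ x, ((c : EReal) - g x).toENN ∂P with hD_def
  have hAle : A ≤ ENNReal.ofReal c := by
    calc A ≤ ∫⁻ _, ENNReal.ofReal c ∂P := by
          refine lintegral_mono fun x => ?_
          rw [← toENN_coe]
          exact toENN_mono (hgb x)
      _ = ENNReal.ofReal c := by simp [lintegral_const]
  have hAfin : A ≠ ⊤ := (hAle.trans_lt (by simp)).ne
  have key : A + D = ENNReal.ofReal c + B := by
    rw [hA_def, hD_def, hB_def, ← lintegral_add_left hg,
      lintegral_congr fun x => pt_identity hc (hgt x) (hgb x),
      lintegral_add_left measurable_const, lintegral_const]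
    simp
  rcases eq_or_ne B ⊤ with hB | hB
  · have hD : D = ⊤ := by
      by_contra hD
      have : A + D ≠ ⊤ := by
        simp [ENNReal.add_eq_top, hAfin, hD]
      rw [key, hB] at this
      simp at this
    rw [hB, hD]
    simp [EReal.sub_top]
  · have hDfin : D ≠ ⊤ := by
      by_contra hD
      have : A + D = ⊤ := by simp [hD]
      rw [key] at this
      simp [ENNReal.add_eq_top, hB] at this
    have hkey : A.toReal + D.toReal = c + B.toReal := by
      have := congrArg ENNReal.toReal key
      rwa [ENNReal.toReal_add hAfin hDfin, ENNReal.toReal_add (by simp) hB,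
        ENNReal.toReal_ofReal hc] at this
    rw [coe_ennreal_fin hAfin, coe_ennreal_fin hB, coe_ennreal_fin hDfin,
      ← EReal.coe_sub, ← EReal.coe_sub, EReal.coe_eq_coe_iff]
    linarith

lemma enn_eq_top_of_forall_ofReal_le {x : ℝ≥0∞} (h : ∀ M : ℝ, ENNReal.ofReal M ≤ x) : x = ⊤ := by
  by_contra hx
  have h1 := h (x.toReal + 1)
  have h2 : (ENNReal.ofReal (x.toReal + 1)).toReal ≤ x.toReal :=
    ENNReal.toReal_mono hx h1
  rw [ENNReal.toReal_ofReal (by positivity)] at h2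
  linarith

/-- Theorem 4.2: existence of an optimizer in the one-period robust optimization problem. -/
theorem one_period_exists_maximizer
    {Ω : Type*} [MeasurableSpace Ω] {d : ℕ} (hd : 1 ≤ d)
    (𝔖 : Set (Measure Ω)) (hne : 𝔖.Nonempty) (hprob : ∀ P ∈ 𝔖, IsProbabilityMeasure P)
    (Ψ : Ω → Rd d → EReal) (C : ℝ) (hΨ : Assump1P 𝔖 Ψ C)
    (hNA : {h : Rd d | QuasiSure 𝔖 fun ω => 0 ≤ horizon (Ψ ω) h} = {0}) :
    ∃ hopt : Rd d,
      (⨅ P ∈ 𝔖, eexp P fun ω => Ψ ω hopt) =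
        ⨆ h : Rd d, ⨅ P ∈ 𝔖, eexp P fun ω => Ψ ω h := by
  classical
  obtain ⟨P₀, hP₀⟩ := hne
  set c : ℝ := max C 0 with hc_def
  have hc : 0 ≤ c := le_max_right _ _
  have hbdd : ∀ ω x, Ψ ω x ≤ (c : EReal) :=
    fun ω x => (hΨ.bdd ω x).trans (by exact_mod_cast le_max_left C 0)
  have mΨ : ∀ h : Rd d, Measurable fun ω => Ψ ω h := fun h =>
    hΨ.meas.comp (measurable_id.prodMk measurable_const)
  have mtoENN : ∀ h : Rd d, Measurable fun ω => (Ψ ω h).toENN := fun h =>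
    toENN_cont.measurable.comp (mΨ h)
  have mD : ∀ h : Rd d, Measurable fun ω => ((c : EReal) - Ψ ω h).toENN := fun h =>
    toENN_cont.measurable.comp ((csub_cont c).measurable.comp (mΨ h))
  set Φ : Rd d → EReal := fun h => ⨅ P ∈ 𝔖, eexp P fun ω => Ψ ω h with hΦ_def
  have heexp : ∀ h : Rd d, ∀ P ∈ 𝔖, (eexp P fun ω => Ψ ω h)
      = (c : EReal) - ((∫⁻ ω, ((c : EReal) - Ψ ω h).toENN ∂P : ℝ≥0∞) : EReal) := by
    intro h P hP
    haveI := hprob P hP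
    exact eexp_eq P (mtoENN h) hc (fun ω => hΨ.noTop ω h) (fun ω => hbdd ω h)
  have hub : ∀ h : Rd d, ∀ P ∈ 𝔖, (eexp P fun ω => Ψ ω h) ≤ (c : EReal) := by
    intro h P hP
    rw [heexp h P hP]
    exact csub_ennreal_le c _
  have hΦub : ∀ h, Φ h ≤ (c : EReal) := fun h => (iInf₂_le P₀ hP₀).trans (hub h P₀ hP₀)
  have hΦbot : ⊥ < Φ 0 := hΨ.zero
  -- Sequential upper semicontinuity of the robust expectation
  have husc : ∀ P ∈ 𝔖, ∀ (u : ℕ → Rd d) (h : Rd d), Tendsto u atTop (𝓝 h) →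
      limsup (fun k => eexp P fun ω => Ψ ω (u k)) atTop ≤ eexp P fun ω => Ψ ω h := by
    intro P hP u h hu
    haveI := hprob P hP
    set F : ℕ → ℝ≥0∞ := fun k => ∫⁻ ω, ((c : EReal) - Ψ ω (u k)).toENN ∂P with hF_def
    have key : ∀ ω, ((c : EReal) - Ψ ω h).toENN
        ≤ liminf (fun k => ((c : EReal) - Ψ ω (u k)).toENN) atTop := by
      intro ω
      have h1 : limsup (fun k => Ψ ω (u k)) atTop ≤ Ψ ω h := limsup_usc (hΨ.usc ω) hu
      have h3 : (c : EReal) - limsup (fun k => Ψ ω (u k)) atTop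
          = liminf (fun k => (c : EReal) - Ψ ω (u k)) atTop :=
        (csub_antitone c).map_limsup_of_continuousAt _ ((csub_cont c).continuousAt)
      have h5 : (liminf (fun k => (c : EReal) - Ψ ω (u k)) atTop).toENN
          = liminf (fun k => ((c : EReal) - Ψ ω (u k)).toENN) atTop :=
        toENN_mono.map_liminf_of_continuousAt _ (toENN_cont.continuousAt)
      calc ((c : EReal) - Ψ ω h).toENN
          ≤ ((c : EReal) - limsup (fun k => Ψ ω (u k)) atTop).toENN :=
            toENN_mono (EReal.sub_le_sub le_rfl h1)
        _ = _ := by rw [h3, h5]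
    have fatou : (∫⁻ ω, ((c : EReal) - Ψ ω h).toENN ∂P) ≤ liminf F atTop := by
      calc (∫⁻ ω, ((c : EReal) - Ψ ω h).toENN ∂P)
          ≤ ∫⁻ ω, liminf (fun k => ((c : EReal) - Ψ ω (u k)).toENN) atTop ∂P :=
            lintegral_mono key
        _ ≤ liminf F atTop := lintegral_liminf_le (fun k => mD (u k))
    have heq : limsup (fun k => eexp P fun ω => Ψ ω (u k)) atTop
        = (c : EReal) - ((liminf F atTop : ℝ≥0∞) : EReal) := by
      have h6 : (fun k => eexp P fun ω => Ψ ω (u k))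
          = (fun t : ℝ≥0∞ => (c : EReal) - (t : EReal)) ∘ F := by
        funext k
        exact heexp (u k) P hP
      rw [h6, ← (csub_ennreal_antitone c).map_liminf_of_continuousAt F
        ((csub_ennreal_cont c).continuousAt)]
    rw [heq, heexp h P hP]
    exact EReal.sub_le_sub le_rfl (EReal.coe_ennreal_le_coe_ennreal_iff.2 fatou)
  -- Coercivity from the no-arbitrage condition
  have hcoerc : ∃ R : ℝ, 0 < R ∧ ∀ h : Rd d, R ≤ ‖h‖ → Φ h ≤ Φ 0 := by
    by_contra hcon
    push_neg at hcon
    choose hh hh1 hh2 using fun n : ℕ => hcon ((n : ℝ) + 1) (by positivity)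
    have hnorm_pos : ∀ n, 0 < ‖hh n‖ := fun n => lt_of_lt_of_le (by positivity) (hh1 n)
    set y : ℕ → Rd d := fun n => (‖hh n‖)⁻¹ • hh n with hy_def
    have hy_mem : ∀ n, y n ∈ Metric.sphere (0 : Rd d) 1 := by
      intro n
      simp only [hy_def, Metric.mem_sphere, dist_zero_right, norm_smul, norm_inv, norm_norm]
      exact inv_mul_cancel₀ (hnorm_pos n).ne'
    obtain ⟨hstar, hstar_mem, φ, hφmono, hφtend⟩ :=
      (isCompact_sphere (0 : Rd d) 1).tendsto_subseq hy_mem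
    have hstar_ne : hstar ∉ ({0} : Set (Rd d)) := by
      intro h0
      rw [Set.mem_singleton_iff] at h0
      rw [h0] at hstar_mem
      simp at hstar_mem
    rw [← hNA] at hstar_ne
    simp only [Set.mem_setOf_eq, QuasiSure, IsPolar] at hstar_ne
    push_neg at hstar_ne
    obtain ⟨P, hP, hPbad⟩ := hstar_ne
    haveI := hprob P hP
    -- the norms tend to infinity
    have hδ : Tendsto (fun k => ‖hh (φ k)‖) atTop atTop := by
      refine tendsto_atTop_mono (f := fun k : ℕ => (k : ℝ) + 1) (fun k => ?_)
        (tendsto_atTop_add_const_right _ 1 tendsto_natCast_atTop_atTop)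
      refine le_trans ?_ (hh1 (φ k))
      have : (k : ℝ) ≤ (φ k : ℝ) := by exact_mod_cast hφmono.id_le k
      show (k : ℝ) + 1 ≤ (φ k : ℝ) + 1
      linarith
    -- pointwise blow-up on the bad set
    set G : Ω → ℝ≥0∞ :=
      fun ω => liminf (fun k => ((c : EReal) - Ψ ω (hh (φ k))).toENN) atTop with hG_def
    have hGmeas : Measurable G := Measurable.liminf (fun k => mD (hh (φ k)))
    have hlim : ∀ ω ∈ {ω | horizon (Ψ ω) hstar < 0}, G ω = ⊤ := by
      intro ω hω
      have hhor : horizon (Ψ ω) hstar < 0 := hω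
      rw [horizon, iInf_lt_iff] at hhor
      obtain ⟨N, hN⟩ := hhor
      obtain ⟨c', hc'1, hc'2⟩ := exists_between hN
      have hc'top : c' ≠ ⊤ := hc'2.ne_top
      have hc'bot : c' ≠ ⊥ := fun h => by rw [h] at hc'1; exact absurd hc'1 (by simp)
      set cr : ℝ := c'.toReal with hcr_def
      have hcrc : c' = (cr : EReal) := (EReal.coe_toReal hc'top hc'bot).symm
      have hcrneg : cr < 0 := by
        rw [hcrc] at hc'2
        exact_mod_cast hc'2
      have hev1 : ∀ᶠ k in atTop, ((N : ℝ) + 1) < ‖hh (φ k)‖ := hδ.eventually_gt_atTop _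
      have hev2 : ∀ᶠ k in atTop, ‖hstar - y (φ k)‖ < 1 / ((N : ℝ) + 1) := by
        have htend : Tendsto (fun k => ‖hstar - y (φ k)‖) atTop (𝓝 0) := by
          have h0 := (tendsto_const_nhds (x := hstar) (f := (atTop : Filter ℕ))).sub hφtend
          rw [sub_self] at h0
          have h1 := (continuous_norm.tendsto (0 : Rd d)).comp h0
          simpa [Function.comp_def] using h1
        exact htend.eventually (gt_mem_nhds (by positivity))
      have hkey : ∀ᶠ k in atTop,
          Ψ ω (hh (φ k)) ≤ ((‖hh (φ k)‖ * cr : ℝ) : EReal) := by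
        filter_upwards [hev1, hev2] with k h1 h2
        set δ : ℝ := ‖hh (φ k)‖ with hδ_def
        have hδpos : (0 : ℝ) < δ := hnorm_pos _
        have hsmul : δ • y (φ k) = hh (φ k) := by
          rw [hy_def]
          rw [smul_smul, mul_inv_cancel₀ hδpos.ne', one_smul]
        have hmem : ((δ⁻¹ : ℝ) : EReal) * Ψ ω (δ • y (φ k))
            ≤ ⨆ (δ' : ℝ) (_ : ((N : ℝ) + 1) < δ') (y' : Rd d)
              (_ : ‖hstar - y'‖ < 1 / ((N : ℝ) + 1)), ((δ'⁻¹ : ℝ) : EReal) * Ψ ω (δ' • y') := by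
          refine le_iSup_of_le δ (le_iSup_of_le h1 (le_iSup_of_le (y (φ k))
            (le_iSup_of_le h2 le_rfl)))
        rw [hsmul] at hmem
        have hlt : ((δ⁻¹ : ℝ) : EReal) * Ψ ω (hh (φ k)) < (cr : EReal) := by
          rw [← hcrc]
          exact lt_of_le_of_lt hmem hc'1
        rcases eq_or_ne (Ψ ω (hh (φ k))) ⊥ with hb | hb
        · rw [hb]; exact bot_le
        · set q : ℝ := (Ψ ω (hh (φ k))).toReal with hq_def
          have hq : Ψ ω (hh (φ k)) = (q : EReal) :=
            (EReal.coe_toReal (hΨ.noTop ω _) hb).symm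
          rw [hq] at hlt ⊢
          rw [← EReal.coe_mul, EReal.coe_lt_coe_iff] at hlt
          rw [EReal.coe_le_coe_iff]
          have hq2 : δ * (δ⁻¹ * q) < δ * cr := (mul_lt_mul_iff_right₀ hδpos).2 hlt
          rw [← mul_assoc, mul_inv_cancel₀ hδpos.ne', one_mul] at hq2
          linarith
      rw [hG_def]
      apply enn_eq_top_of_forall_ofReal_le
      intro M
      apply le_liminf_of_le (by isBoundedDefault)
      have hev3 : ∀ᶠ k in atTop, ‖hh (φ k)‖ * cr ≤ c - M := by
        have : Tendsto (fun k => ‖hh (φ k)‖ * cr) atTop atBot :=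
          Tendsto.atTop_mul_const_of_neg hcrneg hδ
        exact this.eventually (eventually_le_atBot _)
      filter_upwards [hkey, hev3] with k h1 h2
      have h4 : ((M : ℝ) : EReal) ≤ (c : EReal) - Ψ ω (hh (φ k)) := by
        calc ((M : ℝ) : EReal) ≤ (c : EReal) - ((‖hh (φ k)‖ * cr : ℝ) : EReal) := by
              rw [← EReal.coe_sub, EReal.coe_le_coe_iff]
              linarith
          _ ≤ (c : EReal) - Ψ ω (hh (φ k)) := EReal.sub_le_sub le_rfl h1
      calc ENNReal.ofReal M = ((M : ℝ) : EReal).toENN := (toENN_coe M).symm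
        _ ≤ ((c : EReal) - Ψ ω (hh (φ k))).toENN := toENN_mono h4
    -- the integral blows up
    have hbadsub : {ω | horizon (Ψ ω) hstar < 0} ⊆ {ω | G ω = ⊤} := hlim
    have hsmeas : MeasurableSet {ω | G ω = ⊤} := hGmeas (measurableSet_singleton ⊤)
    have hμs : P {ω | G ω = ⊤} ≠ 0 := by
      intro h0
      exact hPbad (measure_mono_null hbadsub h0)
    have hGint : (∫⁻ ω, G ω ∂P) = ⊤ := by
      refine top_unique ?_
      calc (⊤ : ℝ≥0∞) = ⊤ * P {ω | G ω = ⊤} := (ENNReal.top_mul hμs).symm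
        _ = ∫⁻ _ in {ω | G ω = ⊤}, ⊤ ∂P := (setLIntegral_const _ _).symm
        _ = ∫⁻ ω in {ω | G ω = ⊤}, G ω ∂P := by
            refine (setLIntegral_congr_fun hsmeas (fun ω hω => ?_)).symm
            exact hω
        _ ≤ ∫⁻ ω, G ω ∂P := setLIntegral_le_lintegral _ _
    have hliminf_top :
        liminf (fun k => ∫⁻ ω, ((c : EReal) - Ψ ω (hh (φ k))).toENN ∂P) atTop = ⊤ := by
      refine top_unique ?_
      rw [← hGint]
      exact lintegral_liminf_le (fun k => mD (hh (φ k)))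
    -- derive the contradiction
    obtain ⟨r', hr1, hr2⟩ := exists_between hΦbot
    have hr'top : r' ≠ ⊤ := ((hr2.trans_le (hΦub 0)).trans (EReal.coe_lt_top c)).ne
    have hr'bot : r' ≠ ⊥ := hr1.ne'
    set r : ℝ := r'.toReal with hr_def
    have hrr : r' = (r : EReal) := (EReal.coe_toReal hr'top hr'bot).symm
    have hev : ∀ᶠ k in atTop,
        ENNReal.ofReal (c - r) < ∫⁻ ω, ((c : EReal) - Ψ ω (hh (φ k))).toENN ∂P := by
      exact eventually_lt_of_lt_liminf
        (by rw [hliminf_top]; exact ENNReal.ofReal_lt_top) (by isBoundedDefault)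
    obtain ⟨k, hk⟩ := hev.exists
    have hrc : r ≤ c := by
      have : r' ≤ (c : EReal) := hr2.le.trans (hΦub 0)
      rw [hrr] at this
      exact_mod_cast this
    have hle : (eexp P fun ω => Ψ ω (hh (φ k))) ≤ (r : EReal) := by
      rw [heexp _ P hP]
      calc (c : EReal) - ((∫⁻ ω, ((c : EReal) - Ψ ω (hh (φ k))).toENN ∂P : ℝ≥0∞) : EReal)
          ≤ (c : EReal) - ((ENNReal.ofReal (c - r) : ℝ≥0∞) : EReal) :=
            EReal.sub_le_sub le_rfl (EReal.coe_ennreal_le_coe_ennreal_iff.2 hk.le)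
        _ = (r : EReal) := by
            rw [EReal.coe_ennreal_ofReal, max_eq_left (by linarith), ← EReal.coe_sub,
              EReal.coe_eq_coe_iff]
            ring
    have hgt : (r : EReal) < Φ (hh (φ k)) := by
      rw [← hrr]
      exact hr2.trans (hh2 (φ k))
    have hcontra : Φ (hh (φ k)) ≤ (r : EReal) := (iInf₂_le P hP).trans hle
    exact absurd hcontra (not_le.2 hgt)
  -- Final assembly: extract a maximizing sequence in a compact ball
  obtain ⟨R, hRpos, hR⟩ := hcoerc
  set S : EReal := ⨆ h : Rd d, Φ h with hS_def
  rcases eq_or_ne (Φ 0) S with h0 | h0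
  · exact ⟨0, h0⟩
  have hΦ0S : Φ 0 < S := lt_of_le_of_ne (le_iSup Φ 0) h0
  have hSc : S ≤ (c : EReal) := iSup_le hΦub
  have hSbot : ⊥ < S := hΦbot.trans_le (le_iSup Φ 0)
  have hSne1 : S ≠ ⊤ := (hSc.trans_lt (EReal.coe_lt_top c)).ne
  have hSne2 : S ≠ ⊥ := hSbot.ne'
  set s : ℝ := S.toReal with hs_def
  have hSs : S = (s : EReal) := (EReal.coe_toReal hSne1 hSne2).symm
  obtain ⟨t', ht1, ht2⟩ := exists_between hΦ0S
  have ht'top : t' ≠ ⊤ := ((ht2.trans_le hSc).trans (EReal.coe_lt_top c)).ne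
  have ht'bot : t' ≠ ⊥ := (hΦbot.trans ht1).ne'
  set t : ℝ := t'.toReal with ht_def
  have htt : t' = (t : EReal) := (EReal.coe_toReal ht'top ht'bot).symm
  have hts : t < s := by
    have := ht2
    rw [htt, hSs] at this
    exact_mod_cast this
  have hseq : ∀ n : ℕ, ∃ h : Rd d, ((max t (s - 1 / ((n : ℝ) + 1)) : ℝ) : EReal) < Φ h := by
    intro n
    have hlt : ((max t (s - 1 / ((n : ℝ) + 1)) : ℝ) : EReal) < S := by
      rw [hSs, EReal.coe_lt_coe_iff]
      exact max_lt hts (by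
        have : (0 : ℝ) < 1 / ((n : ℝ) + 1) := by positivity
        linarith)
    rw [hS_def, lt_iSup_iff] at hlt
    exact hlt
  choose u hu using hseq
  have hu_ball : ∀ n, u n ∈ Metric.closedBall (0 : Rd d) R := by
    intro n
    rw [Metric.mem_closedBall, dist_zero_right]
    by_contra hn
    have h1 : Φ (u n) ≤ Φ 0 := hR _ (le_of_not_ge (fun h => hn (h.trans (le_refl _))))
    have h2 : Φ 0 < Φ (u n) := by
      refine ht1.trans (lt_of_le_of_lt ?_ (hu n))
      rw [htt, EReal.coe_le_coe_iff]
      exact le_max_left _ _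
    exact absurd h1 (not_le.2 h2)
  obtain ⟨hopt, _, ψ, hψmono, hψtend⟩ :=
    (isCompact_closedBall (0 : Rd d) R).tendsto_subseq hu_ball
  refine ⟨hopt, le_antisymm (le_iSup Φ hopt) ?_⟩
  refine le_iInf₂ fun P hP => ?_
  have htendc : Tendsto (fun k => ((max t (s - 1 / ((ψ k : ℝ) + 1)) : ℝ) : EReal))
      atTop (𝓝 ((s : ℝ) : EReal)) := by
    rw [EReal.tendsto_coe]
    have h1 : Tendsto (fun k => 1 / ((ψ k : ℝ) + 1)) atTop (𝓝 0) := by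
      apply Tendsto.comp tendsto_one_div_add_atTop_nhds_zero_nat hψmono.tendsto_atTop
    have h2 : Tendsto (fun k => max t (s - 1 / ((ψ k : ℝ) + 1))) atTop (𝓝 (max t (s - 0))) :=
      (tendsto_const_nhds.max (tendsto_const_nhds.sub h1))
    rw [sub_zero, max_eq_right hts.le] at h2
    exact h2
  calc S = limsup (fun k => ((max t (s - 1 / ((ψ k : ℝ) + 1)) : ℝ) : EReal)) atTop := by
        rw [htendc.limsup_eq, hSs]
    _ ≤ limsup (fun k => eexp P fun ω => Ψ ω (u (ψ k))) atTop := by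
        refine limsup_le_limsup (Eventually.of_forall fun k => ?_)
          (by isBoundedDefault) (by isBoundedDefault)
        exact ((hu (ψ k)).trans_le (iInf₂_le P hP)).le
    _ ≤ eexp P fun ω => Ψ ω hopt := husc P hP _ _ hψtend

end
end

section
/- In the one-period setting, suppose Ψ : Ω × ℝ^d → ℝ ∪ {−∞} satisfies Assumption 4.1. Then Ψ^∞(ω,h) ≤ 0 for all ω ∈ Ω and h ∈ ℝ^d, and Φ^∞(h) ≤ inf_{P∈𝔓} E^P[Ψ^∞(h)] ≤ 0 for all h ∈ ℝ^d, where Φ^∞ is the horizon function of Φ(h) := inf_{P∈𝔓} E^P[Ψ(h)]. -/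
open MeasureTheory
open scoped ENNReal

noncomputable section

namespace Aux
open Filter Topology
variable {E : Type*} [NormedAddCommGroup E] [NormedSpace ℝ E]

lemma toENN_coe (r : ℝ) : ((r : EReal)).toENN = ENNReal.ofReal r := by simp [EReal.toENN]

lemma toENN_mono : Monotone EReal.toENN := by
  intro x y h
  induction y with
  | bot => simp [le_bot_iff.1 h, EReal.toENN]
  | top => simp [EReal.toENN]
  | coe s =>
    induction x with
    | bot => simp [EReal.toENN]
    | top => simp at h
    | coe r =>
      simp only [EReal.toENN, if_neg (EReal.coe_ne_top _), EReal.toReal_coe]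
      exact ENNReal.ofReal_le_ofReal (by exact_mod_cast h)
lemma toENN_nonpos {x : EReal} (h : x ≤ 0) : x.toENN = 0 := by
  induction x with
  | bot => simp [EReal.toENN]
  | top => simp at h
  | coe r =>
    simp only [EReal.toENN, if_neg (EReal.coe_ne_top _), EReal.toReal_coe]
    exact ENNReal.ofReal_eq_zero.2 (by exact_mod_cast h)
lemma measurable_toENN : Measurable EReal.toENN := by
  unfold EReal.toENN
  exact Measurable.ite (measurableSet_singleton _) measurable_const
    (ENNReal.measurable_ofReal.comp measurable_ereal_toReal)

lemma continuous_toENN : Continuous EReal.toENN := by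
  rw [continuous_iff_continuousAt]
  intro x
  induction x with
  | bot =>
    have hmem : Set.Iio (0 : EReal) ∈ 𝓝 (⊥ : EReal) :=
      isOpen_Iio.mem_nhds (by simp)
    have : EReal.toENN =ᶠ[𝓝 (⊥ : EReal)] fun _ => (0 : ℝ≥0∞) := by
      filter_upwards [hmem] with z hz
      exact toENN_nonpos (le_of_lt hz)
    exact continuousAt_const.congr this.symm
  | top =>
    have : Filter.Tendsto EReal.toENN (𝓝 (⊤ : EReal)) (𝓝 ⊤) := by
      rw [ENNReal.tendsto_nhds_top_iff_nat]
      intro n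
      have hmem : Set.Ioi (((n : ℝ) + 1 : ℝ) : EReal) ∈ 𝓝 (⊤ : EReal) :=
        isOpen_Ioi.mem_nhds (EReal.coe_lt_top _)
      filter_upwards [hmem] with z hz
      have h1 : ENNReal.ofReal ((n : ℝ) + 1) ≤ z.toENN := by
        have h2 := toENN_mono (le_of_lt hz)
        rwa [toENN_coe] at h2
      refine lt_of_lt_of_le ?_ h1
      rw [show ((n : ℝ) + 1) = ((n + 1 : ℕ) : ℝ) by push_cast; ring, ENNReal.ofReal_natCast]
      exact_mod_cast Nat.lt_succ_self n
    have ht : EReal.toENN ⊤ = ⊤ := by simp [EReal.toENN]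
    rw [ContinuousAt, ht]; exact this
  | coe r =>
    have hmem : Set.Ioo ((r - 1 : ℝ) : EReal) ((r + 1 : ℝ) : EReal) ∈ 𝓝 ((r : ℝ) : EReal) :=
      isOpen_Ioo.mem_nhds ⟨by exact_mod_cast sub_lt_self r one_pos, by exact_mod_cast lt_add_one r⟩
    have hcong : EReal.toENN =ᶠ[𝓝 ((r : ℝ) : EReal)] fun z => ENNReal.ofReal z.toReal := by
      filter_upwards [hmem] with z hz
      have : z ≠ ⊤ := ne_top_of_lt hz.2
      simp [EReal.toENN, this]
    have hc : ContinuousAt (fun z : EReal => ENNReal.ofReal z.toReal) ((r : ℝ) : EReal) := by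
      refine ENNReal.continuous_ofReal.continuousAt.comp ?_
      have := EReal.tendsto_toReal (a := ((r : ℝ) : EReal)) (by simp) (by simp)
      simpa [ContinuousAt] using this
    exact hc.congr hcong.symm

lemma toENN_mul {r : ℝ} (hr : 0 < r) (x : EReal) :
    ((r : EReal) * x).toENN = ENNReal.ofReal r * x.toENN := by
  induction x with
  | bot => simp [EReal.coe_mul_bot_of_pos hr, EReal.toENN]
  | top =>
    rw [EReal.coe_mul_top_of_pos hr]
    simp [EReal.toENN, ENNReal.mul_top, (ENNReal.ofReal_pos.2 hr).ne']
  | coe s => rw [← EReal.coe_mul, toENN_coe, toENN_coe, ENNReal.ofReal_mul hr.le]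

lemma toENN_csub {c : ℝ} (hc : 0 ≤ c) {x : EReal} (hx : x ≤ (c : EReal)) :
    ((c : EReal) - x).toENN = (ENNReal.ofReal c - x.toENN) + (-x).toENN := by
  induction x with
  | bot => simp [EReal.toENN]
  | top => exact absurd hx (not_le.2 (EReal.coe_lt_top c))
  | coe s =>
    have hs : s ≤ c := by exact_mod_cast hx
    rw [← EReal.coe_sub, ← EReal.coe_neg, toENN_coe, toENN_coe, toENN_coe]
    rcases le_or_gt 0 s with h0 | h0
    · rw [ENNReal.ofReal_sub _ h0,
        show ENNReal.ofReal (-s) = 0 from ENNReal.ofReal_eq_zero.2 (by linarith), add_zero]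
    · rw [ENNReal.ofReal_eq_zero.2 h0.le, tsub_zero,
        ← ENNReal.ofReal_add hc (by linarith), show c + -s = c - s by ring]

lemma coe_enn_fin {X : ℝ≥0∞} (hX : X ≠ ⊤) : ((X : EReal)) = ((X.toReal : ℝ) : EReal) := by
  rw [← EReal.toReal_coe_ennreal (x := X)]
  exact (EReal.coe_toReal (by simpa [EReal.coe_ennreal_eq_top_iff]) (by
    exact ne_bot_of_le_ne_bot (by simp) (EReal.coe_ennreal_nonneg X))).symm

variable {X : Type*} [MeasurableSpace X] {P : Measure X}

lemma eexp_mono {g g' : X → EReal} (h : ∀ x, g x ≤ g' x) : eexp P g ≤ eexp P g' := by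
  refine EReal.sub_le_sub (EReal.coe_ennreal_le_coe_ennreal_iff.2 ?_)
    (EReal.coe_ennreal_le_coe_ennreal_iff.2 ?_)
  · exact lintegral_mono fun x => toENN_mono (h x)
  · exact lintegral_mono fun x => toENN_mono (EReal.neg_le_neg_iff.2 (h x))

lemma eexp_nonpos {g : X → EReal} (h : ∀ x, g x ≤ 0) : eexp P g ≤ 0 := by
  unfold eexp
  have h1 : (∫⁻ x, (g x).toENN ∂P) = 0 := by
    rw [← lintegral_zero (μ := P)]
    exact lintegral_congr fun x => toENN_nonpos (h x)
  rw [h1]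
  simp only [EReal.coe_ennreal_zero]
  rw [sub_eq_add_neg, zero_add]
  simpa using EReal.neg_le_neg_iff.2 (EReal.coe_ennreal_nonneg _)

lemma eexp_le_const [IsProbabilityMeasure P] {g : X → EReal} {c : ℝ} (hc : 0 ≤ c)
    (h : ∀ x, g x ≤ (c : EReal)) : eexp P g ≤ (c : EReal) := by
  unfold eexp
  have h1 : (∫⁻ x, (g x).toENN ∂P) ≤ ENNReal.ofReal c := by
    calc (∫⁻ x, (g x).toENN ∂P) ≤ ∫⁻ _, ENNReal.ofReal c ∂P :=
          lintegral_mono fun x => by simpa [toENN_coe] using toENN_mono (h x)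
      _ = ENNReal.ofReal c := by simp
  calc ((∫⁻ x, (g x).toENN ∂P : ℝ≥0∞) : EReal) - ((∫⁻ x, (-(g x)).toENN ∂P : ℝ≥0∞) : EReal)
      ≤ ((∫⁻ x, (g x).toENN ∂P : ℝ≥0∞) : EReal) - ((0 : ℝ≥0∞) : EReal) :=
        EReal.sub_le_sub le_rfl (EReal.coe_ennreal_nonneg _)
    _ = ((∫⁻ x, (g x).toENN ∂P : ℝ≥0∞) : EReal) := by
        simp [sub_eq_add_neg]
    _ ≤ ((ENNReal.ofReal c : ℝ≥0∞) : EReal) := EReal.coe_ennreal_le_coe_ennreal_iff.2 h1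
    _ ≤ (c : EReal) := by rw [EReal.coe_ennreal_ofReal]; exact_mod_cast max_le le_rfl hc

lemma ereal_sub_calc {c : ℝ} (hc : 0 ≤ c) (A B : ℝ≥0∞) (hA : A ≤ ENNReal.ofReal c) :
    (c : EReal) - ((((ENNReal.ofReal c - A) + B : ℝ≥0∞)) : EReal) = (A : EReal) - (B : EReal) := by
  have hAt : A ≠ ⊤ := (lt_of_le_of_lt hA ENNReal.ofReal_lt_top).ne
  rcases eq_or_ne B ⊤ with rfl | hBt
  · rw [show ENNReal.ofReal c - A + ⊤ = ⊤ from by simp, EReal.coe_ennreal_top]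
    rw [sub_eq_add_neg, sub_eq_add_neg, EReal.neg_top, EReal.add_bot, EReal.add_bot]
  · have hfin : (ENNReal.ofReal c - A) + B ≠ ⊤ :=
      ENNReal.add_ne_top.2 ⟨(lt_of_le_of_lt tsub_le_self ENNReal.ofReal_lt_top).ne, hBt⟩
    rw [coe_enn_fin hfin, coe_enn_fin hAt, coe_enn_fin hBt,
      ← EReal.coe_sub, ← EReal.coe_sub]
    congr 1
    rw [ENNReal.toReal_add ((lt_of_le_of_lt tsub_le_self ENNReal.ofReal_lt_top).ne) hBt,
      ENNReal.toReal_sub_of_le hA ENNReal.ofReal_ne_top, ENNReal.toReal_ofReal hc]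
    ring

lemma eexp_eq [IsProbabilityMeasure P] {g : X → EReal} (hm : Measurable g) {c : ℝ} (hc : 0 ≤ c)
    (hg : ∀ x, g x ≤ (c : EReal)) :
    eexp P g = (c : EReal) - ((∫⁻ x, ((c : EReal) - g x).toENN ∂P : ℝ≥0∞) : EReal) := by
  have hmA : Measurable fun x => (g x).toENN := measurable_toENN.comp hm
  have hA : (∫⁻ x, (g x).toENN ∂P) ≤ ENNReal.ofReal c := by
    calc (∫⁻ x, (g x).toENN ∂P) ≤ ∫⁻ _, ENNReal.ofReal c ∂P :=
          lintegral_mono fun x => by simpa [toENN_coe] using toENN_mono (hg x)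
      _ = ENNReal.ofReal c := by simp
  have key : (∫⁻ x, ((c : EReal) - g x).toENN ∂P)
      = (ENNReal.ofReal c - ∫⁻ x, (g x).toENN ∂P) + ∫⁻ x, (-(g x)).toENN ∂P := by
    have h1 : (∫⁻ x, ((c : EReal) - g x).toENN ∂P)
        = ∫⁻ x, ((ENNReal.ofReal c - (g x).toENN) + (-(g x)).toENN) ∂P :=
      lintegral_congr fun x => toENN_csub hc (hg x)
    have hmn : Measurable fun x => (-(g x)).toENN := measurable_toENN.comp hm.neg
    rw [h1, lintegral_add_right _ hmn]
    congr 1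
    rw [lintegral_sub hmA (lt_of_le_of_lt hA ENNReal.ofReal_lt_top).ne
      (Filter.Eventually.of_forall fun x => by
        simpa [toENN_coe] using toENN_mono (hg x))]
    simp
  rw [key, ereal_sub_calc hc _ _ hA]
  rfl

lemma ereal_mul_calc {r : ℝ} (hr : 0 < r) (A B : ℝ≥0∞) :
    ((ENNReal.ofReal r * A : ℝ≥0∞) : EReal) - ((ENNReal.ofReal r * B : ℝ≥0∞) : EReal)
      = (r : EReal) * ((A : EReal) - (B : EReal)) := by
  have hor : ENNReal.ofReal r ≠ 0 := (ENNReal.ofReal_pos.2 hr).ne'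
  rcases eq_or_ne B ⊤ with rfl | hBt
  · rw [ENNReal.mul_top hor, EReal.coe_ennreal_top]
    rw [sub_eq_add_neg, sub_eq_add_neg, EReal.neg_top, EReal.add_bot, EReal.add_bot,
      EReal.coe_mul_bot_of_pos hr]
  · rcases eq_or_ne A ⊤ with rfl | hAt
    · rw [ENNReal.mul_top hor, EReal.coe_ennreal_top, coe_enn_fin hBt,
        coe_enn_fin (ENNReal.mul_ne_top ENNReal.ofReal_ne_top hBt),
        EReal.top_sub_coe, EReal.top_sub_coe, EReal.coe_mul_top_of_pos hr]
    · rw [coe_enn_fin hAt, coe_enn_fin hBt,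
        coe_enn_fin (ENNReal.mul_ne_top ENNReal.ofReal_ne_top hAt),
        coe_enn_fin (ENNReal.mul_ne_top ENNReal.ofReal_ne_top hBt),
        ← EReal.coe_sub, ← EReal.coe_sub, ← EReal.coe_mul]
      rw [ENNReal.toReal_mul, ENNReal.toReal_mul, ENNReal.toReal_ofReal hr.le]
      norm_cast
      ring

lemma eexp_const_mul {g : X → EReal} {r : ℝ} (hr : 0 < r) (hm : Measurable g) :
    eexp P (fun x => (r : EReal) * g x) = (r : EReal) * eexp P g := by
  unfold eexp
  have h1 : (∫⁻ x, ((r : EReal) * g x).toENN ∂P)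
      = ENNReal.ofReal r * ∫⁻ x, (g x).toENN ∂P := by
    have hmg : Measurable fun x => (g x).toENN := measurable_toENN.comp hm
    rw [← lintegral_const_mul _ hmg]
    exact lintegral_congr fun x => toENN_mul hr _
  have h2 : (∫⁻ x, (-((r : EReal) * g x)).toENN ∂P)
      = ENNReal.ofReal r * ∫⁻ x, (-(g x)).toENN ∂P := by
    have hmn : Measurable fun x => (-(g x)).toENN := measurable_toENN.comp hm.neg
    rw [← lintegral_const_mul _ hmn]
    refine lintegral_congr fun x => ?_
    rw [← mul_neg, toENN_mul hr]
  rw [h1, h2, ereal_mul_calc hr]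

lemma measurable_const_sub (c : ℝ) : Measurable fun x : EReal => (c : EReal) - x := by
  apply EReal.measurable_of_measurable_real
  have : (fun p : ℝ => (c : EReal) - (p : EReal)) = fun p : ℝ => (((c - p : ℝ) : EReal)) := by
    funext p; rw [EReal.coe_sub]
  rw [this]
  exact measurable_coe_real_ereal.comp (measurable_const.sub measurable_id)

lemma toENN_liminf (b : ℕ → EReal) :
    (Filter.liminf b Filter.atTop).toENN = Filter.liminf (fun k => (b k).toENN) Filter.atTop := by
  have := Monotone.map_liminf_of_continuousAt (F := Filter.atTop) toENN_mono b
    (continuous_toENN.continuousAt)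
  exact this

lemma coe_ennreal_liminf (u : ℕ → ℝ≥0∞) :
    ((Filter.liminf u Filter.atTop : ℝ≥0∞) : EReal)
      = Filter.liminf (fun k => ((u k : ℝ≥0∞) : EReal)) Filter.atTop := by
  have hm : Monotone ((↑) : ℝ≥0∞ → EReal) := EReal.coe_ennreal_strictMono.monotone
  exact Monotone.map_liminf_of_continuousAt (F := Filter.atTop) hm u
    (continuous_coe_ennreal_ereal.continuousAt)

lemma limsup_eexp_le [IsProbabilityMeasure P] (g : ℕ → X → EReal)
    (hm : ∀ k, Measurable (g k)) {c : ℝ} (hc : 0 ≤ c) (hb : ∀ k x, g k x ≤ (c : EReal)) :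
    Filter.limsup (fun k => eexp P (g k)) Filter.atTop
      ≤ eexp P (fun x => Filter.limsup (fun k => g k x) Filter.atTop) := by
  set G : X → EReal := fun x => Filter.limsup (fun k => g k x) Filter.atTop with hG
  have hGm : Measurable G := Measurable.limsup hm
  have hGb : ∀ x, G x ≤ (c : EReal) := by
    intro x
    rw [hG]
    simp only [Filter.limsup_eq_iInf_iSup_of_nat]
    exact iInf_le_of_le 0 (iSup₂_le fun i _ => hb i x)
  set φ : ℕ → X → ℝ≥0∞ := fun k x => ((c : EReal) - g k x).toENN with hφ
  have hφm : ∀ k, Measurable (φ k) := fun k =>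
    measurable_toENN.comp ((measurable_const_sub c).comp (hm k))
  set I : ℕ → ℝ≥0∞ := fun k => ∫⁻ x, φ k x ∂P with hI
  -- pointwise inequality
  have hpt : ∀ x, ((c : EReal) - G x).toENN ≤ Filter.liminf (fun k => φ k x) Filter.atTop := by
    intro x
    have h1 : (c : EReal) - G x ≤ Filter.liminf (fun k => (c : EReal) - g k x) Filter.atTop := by
      have hneg : Filter.liminf (fun k => -(g k x)) Filter.atTop
          = - Filter.limsup (fun k => g k x) Filter.atTop := EReal.liminf_neg
      have h2 : Filter.liminf (fun k : ℕ => (c : EReal)) Filter.atTop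
          + Filter.liminf (fun k => -(g k x)) Filter.atTop
          ≤ Filter.liminf (fun k => (c : EReal) + -(g k x)) Filter.atTop :=
        EReal.le_liminf_add
      rw [Filter.liminf_const, hneg] at h2
      simpa [sub_eq_add_neg] using h2
    calc ((c : EReal) - G x).toENN
        ≤ (Filter.liminf (fun k => (c : EReal) - g k x) Filter.atTop).toENN := toENN_mono h1
      _ = Filter.liminf (fun k => φ k x) Filter.atTop := toENN_liminf _
  have hJ : (∫⁻ x, ((c : EReal) - G x).toENN ∂P) ≤ Filter.liminf I Filter.atTop := by
    calc (∫⁻ x, ((c : EReal) - G x).toENN ∂P)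
        ≤ ∫⁻ x, Filter.liminf (fun k => φ k x) Filter.atTop ∂P := lintegral_mono hpt
      _ ≤ Filter.liminf I Filter.atTop := lintegral_liminf_le hφm
  have hrep : ∀ k, eexp P (g k) = (c : EReal) - ((I k : ℝ≥0∞) : EReal) := fun k =>
    eexp_eq (hm k) hc (hb k)
  have hrepG : eexp P G = (c : EReal) - ((∫⁻ x, ((c : EReal) - G x).toENN ∂P : ℝ≥0∞) : EReal) :=
    eexp_eq hGm hc hGb
  calc Filter.limsup (fun k => eexp P (g k)) Filter.atTop
      = Filter.limsup (fun k => (c : EReal) + -((I k : ℝ≥0∞) : EReal)) Filter.atTop := by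
        simp only [hrep, sub_eq_add_neg]
    _ ≤ Filter.limsup (fun k : ℕ => (c : EReal)) Filter.atTop
        + Filter.limsup (fun k => -((I k : ℝ≥0∞) : EReal)) Filter.atTop := by
        refine EReal.limsup_add_le ?_ ?_
        · left; rw [Filter.limsup_const]; exact EReal.coe_ne_bot c
        · left; rw [Filter.limsup_const]; exact EReal.coe_ne_top c
    _ = (c : EReal) - Filter.liminf (fun k => ((I k : ℝ≥0∞) : EReal)) Filter.atTop := by
        rw [Filter.limsup_const]
        have : Filter.limsup (fun k => -((I k : ℝ≥0∞) : EReal)) Filter.atTop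
            = - Filter.liminf (fun k => ((I k : ℝ≥0∞) : EReal)) Filter.atTop := EReal.limsup_neg
        rw [this, sub_eq_add_neg]
    _ = (c : EReal) - ((Filter.liminf I Filter.atTop : ℝ≥0∞) : EReal) := by
        rw [coe_ennreal_liminf]
    _ ≤ (c : EReal) - ((∫⁻ x, ((c : EReal) - G x).toENN ∂P : ℝ≥0∞) : EReal) :=
        EReal.sub_le_sub le_rfl (EReal.coe_ennreal_le_coe_ennreal_iff.2 hJ)
    _ = eexp P G := hrepG.symm

def Sfun (f : E → EReal) (x : E) (n : ℕ) : EReal :=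
  ⨆ (δ : ℝ) (_ : ((n : ℝ) + 1) < δ) (y : E) (_ : ‖x - y‖ < 1 / ((n : ℝ) + 1)),
    ((δ⁻¹ : ℝ) : EReal) * f (δ • y)

lemma horizon_eq (f : E → EReal) (x : E) : horizon f x = ⨅ n : ℕ, Sfun f x n := rfl

lemma term_le {f : E → EReal} {c : ℝ} (hc : 0 ≤ c) (hf : ∀ z, f z ≤ (c : EReal)) {n : ℕ}
    {δ : ℝ} (hδ : ((n : ℝ) + 1) < δ) (y : E) :
    ((δ⁻¹ : ℝ) : EReal) * f (δ • y) ≤ ((c / ((n : ℝ) + 1) : ℝ) : EReal) := by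
  have hn1 : (0 : ℝ) < (n : ℝ) + 1 := by positivity
  have hδ0 : (0 : ℝ) < δ := lt_trans hn1 hδ
  calc ((δ⁻¹ : ℝ) : EReal) * f (δ • y) ≤ ((δ⁻¹ : ℝ) : EReal) * (c : EReal) :=
        mul_le_mul_of_nonneg_left (hf _) (by exact_mod_cast inv_nonneg.2 hδ0.le)
    _ = ((δ⁻¹ * c : ℝ) : EReal) := (EReal.coe_mul _ _).symm
    _ ≤ ((c / ((n : ℝ) + 1) : ℝ) : EReal) := by
        apply EReal.coe_le_coe_iff.2
        rw [div_eq_inv_mul]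
        exact mul_le_mul_of_nonneg_right
          (inv_anti₀ hn1 hδ.le) hc

lemma Sfun_le {f : E → EReal} {c : ℝ} (hc : 0 ≤ c) (hf : ∀ z, f z ≤ (c : EReal)) (x : E)
    (n : ℕ) : Sfun f x n ≤ ((c / ((n : ℝ) + 1) : ℝ) : EReal) := by
  refine iSup_le fun δ => iSup_le fun hδ => iSup_le fun y => iSup_le fun _ => ?_
  exact term_le hc hf hδ y

lemma horizon_le_zero {f : E → EReal} {c : ℝ} (hc : 0 ≤ c) (hf : ∀ z, f z ≤ (c : EReal))
    (x : E) : horizon f x ≤ 0 := by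
  rw [← EReal.le_of_forall_lt_iff_le]
  intro z hz
  have hz' : (0 : ℝ) < z := by exact_mod_cast hz
  obtain ⟨n, hn⟩ := exists_nat_gt (c / z)
  have h1 : c / ((n : ℝ) + 1) ≤ z := by
    rw [div_le_iff₀ (by positivity)]
    have h2 : c < z * ((n : ℝ) + 1) := by
      rw [← div_lt_iff₀' hz']
      exact hn.trans (lt_add_one _)
    exact h2.le
  calc horizon f x ≤ Sfun f x n := by rw [horizon_eq]; exact iInf_le _ n
    _ ≤ ((c / ((n : ℝ) + 1) : ℝ) : EReal) := Sfun_le hc hf x n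
    _ ≤ (z : EReal) := EReal.coe_le_coe_iff.2 h1

lemma horizon_mono {f g : E → EReal} (h : ∀ z, f z ≤ g z) (x : E) :
    horizon f x ≤ horizon g x := by
  rw [horizon_eq, horizon_eq]
  refine iInf_mono fun n => iSup_mono fun δ => iSup_mono' fun hδ => ⟨hδ, ?_⟩
  refine iSup_mono fun y => iSup_mono fun hy => ?_
  have hδ0 : (0 : ℝ) ≤ δ⁻¹ := by
    have : (0 : ℝ) < δ := lt_trans (by positivity) hδ
    exact (inv_nonneg).2 this.le
  exact mul_le_mul_of_nonneg_left (h _) (by exact_mod_cast hδ0)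

lemma measurable_const_mul_ereal (r : ℝ) : Measurable fun x : EReal => (r : EReal) * x := by
  apply EReal.measurable_of_measurable_real
  have : (fun p : ℝ => (r : EReal) * (p : EReal)) = fun p : ℝ => (((r * p : ℝ) : EReal)) := by
    funext p; rw [EReal.coe_mul]
  rw [this]
  exact measurable_coe_real_ereal.comp (measurable_id.const_mul r)

lemma key {Ω : Type*} [MeasurableSpace Ω] {d : ℕ} (P : Measure Ω) [IsProbabilityMeasure P]
    (Ψ : Ω → Rd d → EReal) {c : ℝ} (hc : 0 ≤ c)
    (hmeas : Measurable fun p : Ω × Rd d => Ψ p.1 p.2)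
    (hbdd : ∀ ω x, Ψ ω x ≤ (c : EReal)) (h : Rd d) :
    horizon (fun x => eexp P fun ω => Ψ ω x) h ≤ eexp P fun ω => horizon (Ψ ω) h := by
  have hΨxm : ∀ x : Rd d, Measurable fun ω => Ψ ω x := fun x =>
    hmeas.comp (measurable_id.prodMk measurable_const)
  set F : Rd d → EReal := fun x => eexp P fun ω => Ψ ω x with hF
  have hFb : ∀ x, F x ≤ (c : EReal) := fun x => eexp_le_const hc (fun ω => hbdd ω x)
  by_cases hbot : horizon F h = ⊥
  · rw [hbot]; exact bot_le
  have hne_top : horizon F h ≠ ⊤ := by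
    refine (lt_of_le_of_lt (le_trans ?_ (Sfun_le hc hFb h 0)) (EReal.coe_lt_top _)).ne
    rw [horizon_eq]; exact iInf_le _ 0
  obtain ⟨l, hl⟩ : ∃ l : ℝ, horizon F h = (l : EReal) :=
    ⟨(horizon F h).toReal, (EReal.coe_toReal hne_top hbot).symm⟩
  have hsel : ∀ k : ℕ, ∃ δ : ℝ, (((k : ℝ) + 1) < δ) ∧ ∃ y : Rd d,
      ‖h - y‖ < 1 / ((k : ℝ) + 1) ∧
      ((l - 1 / ((k : ℝ) + 1) : ℝ) : EReal) < ((δ⁻¹ : ℝ) : EReal) * F (δ • y) := by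
    intro k
    have hSk : ((l : ℝ) : EReal) ≤ Sfun F h k := by
      rw [← hl, horizon_eq]; exact iInf_le _ k
    have h1 : ((l - 1 / ((k : ℝ) + 1) : ℝ) : EReal) < Sfun F h k := by
      refine lt_of_lt_of_le ?_ hSk
      exact_mod_cast sub_lt_self l (by positivity)
    simpa only [Sfun, lt_iSup_iff, exists_prop] using h1
  choose δ hδ y hy hlt using hsel
  have hδpos : ∀ k : ℕ, (0 : ℝ) < δ k := fun k => lt_trans (by positivity) (hδ k)
  set g : ℕ → Ω → EReal := fun k ω => (((δ k)⁻¹ : ℝ) : EReal) * Ψ ω (δ k • y k) with hg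
  have hgm : ∀ k, Measurable (g k) := fun k =>
    (measurable_const_mul_ereal _).comp (hΨxm _)
  have hgb : ∀ k ω, g k ω ≤ (c : EReal) := by
    intro k ω
    refine le_trans (term_le hc (hbdd ω) (hδ k) (y k)) ?_
    exact EReal.coe_le_coe_iff.2 (div_le_self hc (by push_cast; linarith [Nat.cast_nonneg (α := ℝ) k]))
  have hterm : ∀ k, eexp P (g k) = (((δ k)⁻¹ : ℝ) : EReal) * F (δ k • y k) := fun k =>
    eexp_const_mul (inv_pos.2 (hδpos k)) (hΨxm _)
  have claim2 : ((l : ℝ) : EReal) ≤ Filter.limsup (fun k => eexp P (g k)) Filter.atTop := by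
    rw [← EReal.ge_of_forall_gt_iff_ge]
    intro z hz
    have hz' : z < l := by exact_mod_cast hz
    have hlz : (0 : ℝ) < l - z := by linarith
    obtain ⟨k₀, hk₀⟩ := exists_nat_gt (1 / (l - z))
    have hk₀' : 1 / ((k₀ : ℝ) + 1) < l - z := by
      rw [div_lt_iff₀ (by positivity)]
      have := (div_lt_iff₀ hlz).1 (hk₀.trans (lt_add_one _))
      nlinarith
    have hbound : ∀ k, k₀ ≤ k → (z : EReal) ≤ eexp P (g k) := by
      intro k hk
      have hcast : (k₀ : ℝ) ≤ (k : ℝ) := Nat.cast_le.2 hk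
      have h1 : 1 / ((k : ℝ) + 1) ≤ 1 / ((k₀ : ℝ) + 1) :=
        one_div_le_one_div_of_le (by positivity) (by linarith)
      have h2 : z ≤ l - 1 / ((k : ℝ) + 1) := by linarith
      calc (z : EReal) ≤ ((l - 1 / ((k : ℝ) + 1) : ℝ) : EReal) := EReal.coe_le_coe_iff.2 h2
        _ ≤ eexp P (g k) := by rw [hterm k]; exact (hlt k).le
    rw [Filter.limsup_eq_iInf_iSup_of_nat]
    exact le_iInf fun n => le_iSup₂_of_le (max n k₀) (le_max_left _ _)
      (hbound _ (le_max_right _ _))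
  have claim4 : ∀ ω, Filter.limsup (fun k => g k ω) Filter.atTop ≤ horizon (Ψ ω) h := by
    intro ω
    rw [horizon_eq]
    refine le_iInf fun m => ?_
    rw [Filter.limsup_eq_iInf_iSup_of_nat]
    refine iInf_le_of_le m (iSup₂_le fun i him => ?_)
    have hδi : ((m : ℝ) + 1) < δ i := by
      refine lt_of_le_of_lt ?_ (hδ i)
      have : (m : ℝ) ≤ (i : ℝ) := Nat.cast_le.2 him
      linarith
    have hyi : ‖h - y i‖ < 1 / ((m : ℝ) + 1) := by
      refine lt_of_lt_of_le (hy i) (one_div_le_one_div_of_le (by positivity) ?_)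
      have : (m : ℝ) ≤ (i : ℝ) := Nat.cast_le.2 him
      linarith
    exact le_iSup_of_le (δ i) (le_iSup_of_le hδi (le_iSup_of_le (y i)
      (le_iSup_of_le hyi le_rfl)))
  calc horizon F h = ((l : ℝ) : EReal) := hl
    _ ≤ Filter.limsup (fun k => eexp P (g k)) Filter.atTop := claim2
    _ ≤ eexp P (fun ω => Filter.limsup (fun k => g k ω) Filter.atTop) :=
        limsup_eexp_le g hgm hc hgb
    _ ≤ eexp P fun ω => horizon (Ψ ω) h := eexp_mono claim4

end Aux

/-- Lemma 4.4, first part: nonpositivity of the horizon functions `Ψ^∞` and `Φ^∞`. -/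
theorem one_period_horizon_nonpositive
    {Ω : Type*} [MeasurableSpace Ω] {d : ℕ} (hd : 1 ≤ d)
    (𝔖 : Set (Measure Ω)) (hne : 𝔖.Nonempty) (hprob : ∀ P ∈ 𝔖, IsProbabilityMeasure P)
    (Ψ : Ω → Rd d → EReal) (C : ℝ) (hΨ : Assump1P 𝔖 Ψ C) :
    (∀ (ω : Ω) (h : Rd d), horizon (Ψ ω) h ≤ 0) ∧
    ∀ h : Rd d,
      horizon (fun h' : Rd d => ⨅ P ∈ 𝔖, eexp P fun ω => Ψ ω h') h ≤
        (⨅ P ∈ 𝔖, eexp P fun ω => horizon (Ψ ω) h) ∧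
      (⨅ P ∈ 𝔖, eexp P fun ω => horizon (Ψ ω) h) ≤ 0 := by
  have hC : (0 : ℝ) ≤ max C 0 := le_max_right _ _
  have hbdd' : ∀ ω x, Ψ ω x ≤ ((max C 0 : ℝ) : EReal) := fun ω x =>
    (hΨ.bdd ω x).trans (EReal.coe_le_coe_iff.2 (le_max_left _ _))
  have part1 : ∀ (ω : Ω) (h' : Rd d), horizon (Ψ ω) h' ≤ 0 := fun ω h' =>
    Aux.horizon_le_zero hC (hbdd' ω) h'
  refine ⟨part1, fun h => ⟨?_, ?_⟩⟩
  · refine le_iInf fun P => le_iInf fun hP => ?_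
    haveI := hprob P hP
    calc horizon (fun h' : Rd d => ⨅ P ∈ 𝔖, eexp P fun ω => Ψ ω h') h
        ≤ horizon (fun h' : Rd d => eexp P fun ω => Ψ ω h') h :=
          Aux.horizon_mono (fun z => iInf₂_le P hP) h
      _ ≤ eexp P fun ω => horizon (Ψ ω) h := Aux.key P Ψ hC hΨ.meas hbdd' h
  · obtain ⟨P₀, hP₀⟩ := hne
    exact le_trans (iInf₂_le P₀ hP₀) (Aux.eexp_nonpos fun ω => part1 ω h)

end
end

section
/- In the one-period setting, suppose Ψ : Ω × ℝ^d → ℝ ∪ {−∞} satisfies Assumption 4.1 and the no-arbitrage condition K = {0} holds. Then for every h ∈ ℝ^d the following are equivalent: (i) Φ^∞(h) = 0; (ii) Ψ^∞(h) = 0 𝔓-q.s.; (iii) h = 0; where Φ^∞ is the horizon function of Φ(h) := inf_{P∈𝔓} E^P[Ψ(h)]. -/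
open MeasureTheory
open scoped ENNReal

noncomputable section

namespace OnePeriodAux

lemma toENN_mono : Monotone EReal.toENN := by
  intro x y hxy
  unfold EReal.toENN
  rcases eq_or_ne y ⊤ with hy | hy
  · simp [hy]
  · have hx : x ≠ ⊤ := fun h => hy (top_le_iff.1 (h ▸ hxy))
    rw [if_neg hx, if_neg hy]
    rcases eq_or_ne x ⊥ with hb | hb
    · simp [hb]
    · rcases eq_or_ne y ⊥ with hyb | hyb
      · exact absurd (le_bot_iff.1 (hyb ▸ hxy)) hb
      · exact ENNReal.ofReal_le_ofReal (EReal.toReal_le_toReal hxy hb hy)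

lemma toENN_le_ofReal {x : EReal} {c : ℝ} (hx : x ≤ (c : EReal)) :
    x.toENN ≤ ENNReal.ofReal c := by
  have : ((c : EReal)).toENN = ENNReal.ofReal c := by
    unfold EReal.toENN; rw [if_neg (EReal.coe_ne_top c), EReal.toReal_coe]
  exact this ▸ toENN_mono hx

lemma ofReal_le_toENN {x : EReal} {c : ℝ} (hx : (c : EReal) ≤ x) :
    ENNReal.ofReal c ≤ x.toENN := by
  have : ((c : EReal)).toENN = ENNReal.ofReal c := by
    unfold EReal.toENN; rw [if_neg (EReal.coe_ne_top c), EReal.toReal_coe]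
  exact this ▸ toENN_mono hx

lemma measurable_toENN : Measurable EReal.toENN := by
  unfold EReal.toENN
  refine Measurable.ite ?_ measurable_const
    (ENNReal.measurable_ofReal.comp measurable_ereal_toReal)
  exact MeasurableSet.singleton (⊤ : EReal) |>.congr (by ext x; simp)


lemma horizon_le_zero {E : Type*} [NormedAddCommGroup E] [NormedSpace ℝ E]
    {f : E → EReal} {c : ℝ} (hc : 0 ≤ c) (hf : ∀ x, f x ≤ (c : EReal)) (x : E) :
    horizon f x ≤ 0 := by
  have key : ∀ n : ℕ, horizon f x ≤ ((c / ((n : ℝ) + 1) : ℝ) : EReal) := by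
    intro n
    refine (iInf_le _ n).trans ?_
    refine iSup_le fun δ => iSup_le fun hδ => iSup_le fun y => iSup_le fun _ => ?_
    have hn1 : (0:ℝ) < (n:ℝ) + 1 := by positivity
    have hδ0 : (0:ℝ) < δ := lt_trans hn1 hδ
    calc ((δ⁻¹ : ℝ) : EReal) * f (δ • y) ≤ ((δ⁻¹ : ℝ) : EReal) * (c : EReal) :=
          mul_le_mul_of_nonneg_left (hf _) (by exact_mod_cast inv_nonneg.2 hδ0.le)
      _ = ((δ⁻¹ * c : ℝ) : EReal) := (EReal.coe_mul _ _).symm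
      _ ≤ _ := by
          apply EReal.coe_le_coe_iff.2
          rw [inv_mul_eq_div]
          exact div_le_div_of_nonneg_left hc hn1 hδ.le |>.trans_eq rfl |> (fun h => h)
            |>.trans le_rfl
  by_contra hlt
  push_neg at hlt
  obtain ⟨r, hr0, hrx⟩ := EReal.lt_iff_exists_real_btwn.1 hlt
  have hr0' : (0:ℝ) < r := by exact_mod_cast hr0
  obtain ⟨n, hn⟩ := exists_nat_gt (c / r)
  have h1 : c / ((n:ℝ) + 1) < r := by
    rw [div_lt_iff₀ (by positivity)]
    have := (div_lt_iff₀ hr0').1 (hn.trans (lt_add_one (n:ℝ)))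
    linarith [this]
  have := hrx.trans_le (key n)
  exact absurd (EReal.coe_lt_coe_iff.1 this) (not_lt.2 h1.le)


lemma eexp_le_max {X : Type*} [MeasurableSpace X] (P : Measure X) [IsProbabilityMeasure P]
    {g : X → EReal} {c : ℝ} (hg : ∀ x, g x ≤ (c : EReal)) :
    eexp P g ≤ ((max c 0 : ℝ) : EReal) := by
  have ha : (∫⁻ x, (g x).toENN ∂P) ≤ ENNReal.ofReal (max c 0) := by
    calc (∫⁻ x, (g x).toENN ∂P) ≤ ∫⁻ _, ENNReal.ofReal (max c 0) ∂P :=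
          lintegral_mono fun x => toENN_le_ofReal ((hg x).trans
            (EReal.coe_le_coe_iff.2 (le_max_left c 0)))
      _ = ENNReal.ofReal (max c 0) := by simp
  calc eexp P g ≤ ((ENNReal.ofReal (max c 0) : ℝ≥0∞) : EReal) - (0 : EReal) :=
        EReal.sub_le_sub (EReal.coe_ennreal_le_coe_ennreal_iff.2 ha)
          (by exact_mod_cast EReal.coe_ennreal_nonneg _)
    _ = ((max c 0 : ℝ) : EReal) := by
        rw [sub_zero, EReal.coe_ennreal_ofReal, max_eq_left (le_max_right c 0)]

lemma horizon_zero_eq_zero {E : Type*} [NormedAddCommGroup E] [NormedSpace ℝ E]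
    {f : E → EReal} {c : ℝ} (hc : 0 ≤ c) (hf : ∀ x, f x ≤ (c : EReal))
    (hbot : f 0 ≠ ⊥) : horizon f 0 = 0 := by
  refine le_antisymm (horizon_le_zero hc hf 0) ?_
  refine le_iInf fun n => le_of_forall_lt fun b hb => ?_
  have htop : f 0 ≠ ⊤ := fun h => by
    simpa [h] using (hf 0).trans_lt (EReal.coe_lt_top c)
  set r : ℝ := (f 0).toReal with hr
  have hco : ((r : ℝ) : EReal) = f 0 := EReal.coe_toReal htop hbot
  have hterm : ∀ δ : ℝ, ((n : ℝ) + 1) < δ →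
      (((δ⁻¹ * r : ℝ) : EReal)) ≤
        ⨆ (δ : ℝ) (_ : ((n : ℝ) + 1) < δ) (y : E) (_ : ‖(0:E) - y‖ < 1 / ((n : ℝ) + 1)),
          ((δ⁻¹ : ℝ) : EReal) * f (δ • y) := by
    intro δ hδ
    have hy : ‖(0:E) - 0‖ < 1 / ((n : ℝ) + 1) := by
      simp only [sub_zero, norm_zero]; positivity
    have : (((δ⁻¹ * r : ℝ) : EReal)) = ((δ⁻¹ : ℝ) : EReal) * f (δ • (0:E)) := by
      rw [smul_zero, ← hco, ← EReal.coe_mul]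
    rw [this]
    exact le_iSup_of_le δ (le_iSup_of_le hδ (le_iSup_of_le (0:E) (le_iSup_of_le hy le_rfl)))
  induction b using EReal.rec with
  | top => exact absurd hb (by simp)
  | bot =>
      exact lt_of_lt_of_le (EReal.bot_lt_coe _) (hterm ((n:ℝ)+2) (by linarith))
  | coe s =>
      have hs : s < 0 := by exact_mod_cast hb
      rcases le_or_gt 0 r with hr0 | hr0
      · refine lt_of_lt_of_le ?_ (hterm ((n:ℝ)+2) (by linarith))
        have : (0:ℝ) ≤ ((n:ℝ)+2)⁻¹ * r := by positivity
        exact_mod_cast lt_of_lt_of_le hs this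
      · set δ : ℝ := max ((n:ℝ)+2) (r/s + 1) with hδdef
        have hδ1 : ((n:ℝ)+1) < δ := lt_of_lt_of_le (by linarith) (le_max_left _ _)
        have hδpos : (0:ℝ) < δ := lt_trans (by positivity) hδ1
        refine lt_of_lt_of_le ?_ (hterm δ hδ1)
        have h2 : r/s + 1 ≤ δ := le_max_right _ _
        have : s < δ⁻¹ * r := by
          rw [inv_mul_eq_div, lt_div_iff₀ hδpos]
          have hrs : s * (r/s) = r := by field_simp; rw [mul_comm, mul_div_assoc, div_self hs.ne, mul_one]
          nlinarith [mul_le_mul_of_nonpos_left h2 hs.le]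
        exact_mod_cast this

lemma horizon_Phi_neg {Ω : Type*} [MeasurableSpace Ω] {d : ℕ}
    (𝔖 : Set (Measure Ω)) (Ψ : Ω → Rd d → EReal) (C : ℝ)
    (hmeas : Measurable fun p : Ω × Rd d => Ψ p.1 p.2)
    (hbdd : ∀ ω x, Ψ ω x ≤ (C : EReal))
    (h : Rd d) {P : Measure Ω} (hP : P ∈ 𝔖) [IsProbabilityMeasure P]
    (hA : P {ω | ¬ 0 ≤ horizon (Ψ ω) h} ≠ 0) :
    horizon (fun h' : Rd d => ⨅ P ∈ 𝔖, eexp P fun ω => Ψ ω h') h < 0 := by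
  classical
  set T : ℕ → Ω → EReal := fun n ω =>
    ⨆ (δ : ℝ) (_ : ((n : ℝ) + 1) < δ) (y : Rd d) (_ : ‖h - y‖ < 1 / ((n : ℝ) + 1)),
      ((δ⁻¹ : ℝ) : EReal) * Ψ ω (δ • y) with hT
  set B : ℕ → ℕ → Set Ω := fun k n => {ω | T n ω < ((-(1/((k:ℝ)+1)) : ℝ) : EReal)} with hB
  -- Step 1: the bad set is covered by the B k n
  have hsub : {ω | ¬ 0 ≤ horizon (Ψ ω) h} ⊆ ⋃ k, ⋃ n, B k n := by
    intro ω hω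
    rw [Set.mem_setOf_eq, not_le] at hω
    obtain ⟨r, hr1, hr2⟩ := EReal.lt_iff_exists_real_btwn.1 hω
    have hr2' : r < 0 := by exact_mod_cast hr2
    obtain ⟨k, hk⟩ := exists_nat_one_div_lt (show (0:ℝ) < -r by linarith)
    have : horizon (Ψ ω) h < ((-(1/((k:ℝ)+1)) : ℝ) : EReal) := by
      refine hr1.trans ?_
      exact_mod_cast (by linarith : r < -(1/((k:ℝ)+1)))
    have : ⨅ n, T n ω < ((-(1/((k:ℝ)+1)) : ℝ) : EReal) := this
    obtain ⟨n, hn⟩ := iInf_lt_iff.1 this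
    exact Set.mem_iUnion.2 ⟨k, Set.mem_iUnion.2 ⟨n, hn⟩⟩
  -- Step 2: one of them has positive measure
  have hex : ∃ k n, P (B k n) ≠ 0 := by
    by_contra hc
    push_neg at hc
    exact hA (measure_mono_null hsub
      (measure_iUnion_null fun k => measure_iUnion_null fun n => hc k n))
  obtain ⟨k, n, hkn⟩ := hex
  set e : ℝ := (P (B k n)).toReal with he
  have hepos : 0 < e := ENNReal.toReal_pos hkn (measure_ne_top P _)
  have hk1 : (0:ℝ) < (k:ℝ) + 1 := by positivity
  -- Step 3: key bound on eexp for parameters admissible at level n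
  have key : ∀ δ : ℝ, ∀ y : Rd d, ((n : ℝ) + 1) < δ → ‖h - y‖ < 1 / ((n : ℝ) + 1) →
      eexp P (fun ω => Ψ ω (δ • y)) ≤ ((max C 0 - δ * (e/((k:ℝ)+1)) : ℝ) : EReal) := by
    intro δ y hδ hy
    have hδpos : (0:ℝ) < δ := lt_trans (by positivity) hδ
    have ha : (∫⁻ ω, (Ψ ω (δ • y)).toENN ∂P) ≤ ENNReal.ofReal (max C 0) := by
      calc (∫⁻ ω, (Ψ ω (δ • y)).toENN ∂P) ≤ ∫⁻ _, ENNReal.ofReal (max C 0) ∂P :=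
            lintegral_mono fun ω => toENN_le_ofReal ((hbdd ω _).trans
              (EReal.coe_le_coe_iff.2 (le_max_left C 0)))
        _ = ENNReal.ofReal (max C 0) := by simp
    -- pointwise bound on B k n
    have hωB : ∀ ω ∈ B k n, ((δ * (1/((k:ℝ)+1)) : ℝ) : EReal) ≤ -(Ψ ω (δ • y)) := by
      intro ω hω
      have h1 : ((δ⁻¹ : ℝ) : EReal) * Ψ ω (δ • y) ≤ T n ω := by
        simp only [hT]
        exact le_iSup_of_le δ (le_iSup_of_le hδ (le_iSup_of_le y (le_iSup_of_le hy le_rfl)))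
      have hterm : ((δ⁻¹ : ℝ) : EReal) * Ψ ω (δ • y) < ((-(1/((k:ℝ)+1)) : ℝ) : EReal) :=
        lt_of_le_of_lt h1 hω
      have hΨle : Ψ ω (δ • y) ≤ ((δ * -(1/((k:ℝ)+1)) : ℝ) : EReal) := by
        by_contra hcon
        push_neg at hcon
        have := mul_le_mul_of_nonneg_left hcon.le
          (show (0:EReal) ≤ ((δ⁻¹ : ℝ) : EReal) by exact_mod_cast inv_nonneg.2 hδpos.le)
        rw [← EReal.coe_mul] at this
        have heq : δ⁻¹ * (δ * -(1/((k:ℝ)+1))) = -(1/((k:ℝ)+1)) := by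
          field_simp
        rw [heq] at this
        exact absurd (this.trans_lt hterm) (lt_irrefl _)
      have := EReal.neg_le_neg_iff.2 hΨle
      refine le_trans (le_of_eq ?_) this
      rw [← EReal.coe_neg]
      norm_num
    -- lower bound on the negative part integral
    have hmg : Measurable fun ω => (-(Ψ ω (δ • y))).toENN := by
      refine measurable_toENN.comp ?_
      exact (continuous_neg.measurable).comp (hmeas.comp (measurable_prodMk_right))
    have hbint : ENNReal.ofReal (δ * (1/((k:ℝ)+1))) * P (B k n)
        ≤ ∫⁻ ω, (-(Ψ ω (δ • y))).toENN ∂P := by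
      refine le_trans (mul_le_mul_right (measure_mono ?_) _)
        (mul_meas_ge_le_lintegral₀ hmg.aemeasurable _)
      exact fun ω hω => ofReal_le_toENN (hωB ω hω)
    -- combine
    have hsub' : eexp P (fun ω => Ψ ω (δ • y)) ≤
        ((ENNReal.ofReal (max C 0) : ℝ≥0∞) : EReal)
          - ((ENNReal.ofReal (δ * (1/((k:ℝ)+1))) * P (B k n) : ℝ≥0∞) : EReal) :=
      EReal.sub_le_sub (EReal.coe_ennreal_le_coe_ennreal_iff.2 ha)
        (EReal.coe_ennreal_le_coe_ennreal_iff.2 hbint)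
    refine hsub'.trans (le_of_eq ?_)
    have hPe : P (B k n) = ENNReal.ofReal e := (ENNReal.ofReal_toReal (measure_ne_top P _)).symm
    rw [hPe, ← ENNReal.ofReal_mul (by positivity)]
    rw [EReal.coe_ennreal_ofReal, EReal.coe_ennreal_ofReal,
      max_eq_left (le_max_right C 0), max_eq_left (by positivity : (0:ℝ) ≤ δ * (1/((k:ℝ)+1)) * e),
      ← EReal.coe_sub]
    norm_cast
    ring
  -- Step 4: choose a level m
  obtain ⟨m₀, hm₀⟩ := exists_nat_gt (max C 0 * (2*((k:ℝ)+1))/e)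
  set m : ℕ := max n m₀ with hm
  have hmn : ((n:ℝ) + 1) ≤ ((m:ℝ) + 1) := by
    have : (n:ℝ) ≤ m := by exact_mod_cast le_max_left n m₀
    linarith
  have hm1 : (0:ℝ) < (m:ℝ) + 1 := by positivity
  have key2 : max C 0 / ((m:ℝ)+1) ≤ e / (2*((k:ℝ)+1)) := by
    have h1 : max C 0 * (2*((k:ℝ)+1))/e < (m:ℝ) + 1 := by
      have : (m₀:ℝ) ≤ m := by exact_mod_cast le_max_right n m₀
      linarith
    rw [div_le_div_iff₀ hm1 (by positivity)]
    rw [div_lt_iff₀ hepos] at h1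
    nlinarith
  -- Step 5: conclude
  refine lt_of_le_of_lt ((iInf_le _ m).trans (iSup_le fun δ => iSup_le fun hδ =>
    iSup_le fun y => iSup_le fun hy => ?_))
    (show ((max C 0/((m:ℝ)+1) - e/((k:ℝ)+1) : ℝ) : EReal) < 0 by
      apply EReal.coe_lt_coe_iff.2 ?_ |>.trans_le le_rfl
      have : e / (2*((k:ℝ)+1)) < e / ((k:ℝ)+1) := by
        rw [div_lt_div_iff₀ (by positivity) hk1]; nlinarith
      linarith [key2])
  · have hδpos : (0:ℝ) < δ := lt_trans hm1 hδ
    have hδn : ((n:ℝ) + 1) < δ := lt_of_le_of_lt hmn hδ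
    have hyn : ‖h - y‖ < 1 / ((n : ℝ) + 1) := by
      refine hy.trans_le ?_
      exact div_le_div_of_nonneg_left (by norm_num) (by positivity) hmn
    have hPhi : (⨅ P' ∈ 𝔖, eexp P' fun ω => Ψ ω (δ • y)) ≤
        ((max C 0 - δ * (e/((k:ℝ)+1)) : ℝ) : EReal) :=
      le_trans (iInf₂_le P hP) (key δ y hδn hyn)
    calc ((δ⁻¹ : ℝ) : EReal) * (⨅ P' ∈ 𝔖, eexp P' fun ω => Ψ ω (δ • y))
        ≤ ((δ⁻¹ : ℝ) : EReal) * ((max C 0 - δ * (e/((k:ℝ)+1)) : ℝ) : EReal) :=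
          mul_le_mul_of_nonneg_left hPhi (by exact_mod_cast inv_nonneg.2 hδpos.le)
      _ = ((δ⁻¹ * (max C 0 - δ * (e/((k:ℝ)+1))) : ℝ) : EReal) := (EReal.coe_mul _ _).symm
      _ ≤ ((max C 0/((m:ℝ)+1) - e/((k:ℝ)+1) : ℝ) : EReal) := by
          apply EReal.coe_le_coe_iff.2
          have heq : δ⁻¹ * (max C 0 - δ * (e/((k:ℝ)+1))) = max C 0/δ - e/((k:ℝ)+1) := by
            field_simp
          rw [heq]
          have : max C 0 / δ ≤ max C 0 / ((m:ℝ)+1) :=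
            div_le_div_of_nonneg_left (le_max_right C 0) hm1 hδ.le |>.trans le_rfl
          linarith

end OnePeriodAux

open OnePeriodAux in
/-- Lemma 4.4, second part: under no-arbitrage, `Φ^∞(h) = 0` iff `Ψ^∞(h) = 0` `𝔖`-q.s.
iff `h = 0`. -/
theorem one_period_horizon_zero_iff
    {Ω : Type*} [MeasurableSpace Ω] {d : ℕ} (hd : 1 ≤ d)
    (𝔖 : Set (Measure Ω)) (hne : 𝔖.Nonempty) (hprob : ∀ P ∈ 𝔖, IsProbabilityMeasure P)
    (Ψ : Ω → Rd d → EReal) (C : ℝ) (hΨ : Assump1P 𝔖 Ψ C)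
    (hNA : {h : Rd d | QuasiSure 𝔖 fun ω => 0 ≤ horizon (Ψ ω) h} = {0}) :
    ∀ h : Rd d,
      (horizon (fun h' : Rd d => ⨅ P ∈ 𝔖, eexp P fun ω => Ψ ω h') h = 0 ↔
        QuasiSure 𝔖 fun ω => horizon (Ψ ω) h = 0) ∧
      ((QuasiSure 𝔖 fun ω => horizon (Ψ ω) h = 0) ↔ h = 0) := by
  intro h
  obtain ⟨P₀, hP₀⟩ := hne
  haveI : IsProbabilityMeasure P₀ := hprob P₀ hP₀
  have hmax0 : (0:ℝ) ≤ max C 0 := le_max_right C 0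
  have hC' : ∀ ω (x : Rd d), Ψ ω x ≤ ((max C 0 : ℝ) : EReal) := fun ω x =>
    (hΨ.bdd ω x).trans (EReal.coe_le_coe_iff.2 (le_max_left C 0))
  have hψle : ∀ ω (h' : Rd d), horizon (Ψ ω) h' ≤ 0 :=
    fun ω h' => horizon_le_zero hmax0 (hC' ω) h'
  have hsetEq : ∀ h' : Rd d,
      {ω : Ω | ¬ horizon (Ψ ω) h' = 0} = {ω : Ω | ¬ 0 ≤ horizon (Ψ ω) h'} := by
    intro h'; ext ω
    simp only [Set.mem_setOf_eq, not_le]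
    constructor
    · intro hne0; exact lt_of_le_of_ne (hψle ω h') hne0
    · intro hlt; exact hlt.ne
  have hQQ : ∀ h' : Rd d, (QuasiSure 𝔖 fun ω => horizon (Ψ ω) h' = 0) ↔
      (QuasiSure 𝔖 fun ω => 0 ≤ horizon (Ψ ω) h') := by
    intro h'
    unfold QuasiSure IsPolar
    rw [hsetEq h']
  have hmem : ∀ h' : Rd d, (QuasiSure 𝔖 fun ω => 0 ≤ horizon (Ψ ω) h') ↔ h' = 0 :=
    fun h' => (Set.ext_iff.1 hNA h').trans Set.mem_singleton_iff
  have h23 : (QuasiSure 𝔖 fun ω => horizon (Ψ ω) h = 0) ↔ h = 0 :=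
    (hQQ h).trans (hmem h)
  have h13 : horizon (fun h' : Rd d => ⨅ P ∈ 𝔖, eexp P fun ω => Ψ ω h') h = 0 ↔ h = 0 := by
    constructor
    · intro h0
      by_contra hne0
      have hnq : ¬ QuasiSure 𝔖 fun ω => 0 ≤ horizon (Ψ ω) h := fun hq => hne0 ((hmem h).1 hq)
      unfold QuasiSure IsPolar at hnq
      push_neg at hnq
      obtain ⟨P, hP, hA⟩ := hnq
      haveI : IsProbabilityMeasure P := hprob P hP
      exact absurd h0 (horizon_Phi_neg 𝔖 Ψ C hΨ.meas hΨ.bdd h hP (by simpa only [not_le] using hA)).ne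
    · rintro rfl
      refine horizon_zero_eq_zero hmax0 ?_ ?_
      · intro x
        have h1 : (⨅ P ∈ 𝔖, eexp P fun ω => Ψ ω x) ≤ ((max (max C 0) 0 : ℝ) : EReal) :=
          le_trans (iInf₂_le P₀ hP₀) (eexp_le_max P₀ (fun ω => hC' ω x))
        have h2 : ((max (max C 0) 0 : ℝ) : EReal) = ((max C 0 : ℝ) : EReal) := by
          rw [max_eq_left hmax0]
        exact h1.trans (le_of_eq h2)
      · exact hΨ.zero.ne'
  exact ⟨h13.trans h23.symm, h23⟩

end
end

section
/- Let f : ℝ^m × ℝ^n → ℝ ∪ {−∞} be proper and upper semicontinuous, and assume {x ∈ ℝ^n : f^∞(0,x) ≥ 0} = {0}, where f^∞ is the horizon function of f on ℝ^{m+n}. Then the function p(u) := sup_{x∈ℝ^n} f(u,x) is proper and upper semicontinuous; for each u ∈ dom p there exists x(u) ∈ ℝ^n with f(u, x(u)) = p(u); moreover p^∞(u) = sup_{x∈ℝ^n} f^∞(u,x) for all u ∈ ℝ^m, and this supremum is attained whenever u ∈ dom p^∞. -/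
open scoped ENNReal
open Filter

noncomputable section

theorem EReal.le_of_forall_coe_lt_le {a b : EReal}
    (h : ∀ x : ℝ, (x : EReal) < a → (x : EReal) ≤ b) : a ≤ b := by
  by_contra hab
  push_neg at hab
  obtain ⟨x, hx1, hx2⟩ := EReal.exists_between_coe_real hab
  exact absurd (h x hx2) (not_le.2 hx1)

theorem le_horizon_of_seq {E : Type*} [NormedAddCommGroup E] [NormedSpace ℝ E]
    (g : E → EReal) (x : E) (δ : ℕ → ℝ) (y : ℕ → E) (c : EReal)
    (hδ : Tendsto δ atTop atTop)
    (hy : Tendsto y atTop (nhds x))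
    (hc : ∀ b : ℝ, (b : EReal) < c →
      ∀ᶠ k in atTop, (b : EReal) < (((δ k)⁻¹ : ℝ) : EReal) * g (δ k • y k)) :
    c ≤ horizon g x := by
  refine le_iInf fun N => ?_
  refine EReal.le_of_forall_coe_lt_le fun b hb => ?_
  have h1 : ∀ᶠ k in atTop, ((N : ℝ) + 1) < δ k := hδ.eventually_gt_atTop _
  have h2 : ∀ᶠ k in atTop, ‖x - y k‖ < 1 / ((N : ℝ) + 1) := by
    have hpos : (0 : ℝ) < 1 / ((N : ℝ) + 1) := by positivity
    filter_upwards [hy (Metric.ball_mem_nhds x hpos)] with k hk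
    simp only [Set.mem_preimage, Metric.mem_ball, dist_eq_norm] at hk
    rwa [norm_sub_rev]
  obtain ⟨k, hk1, hk2, hk3⟩ := (h1.and (h2.and (hc b hb))).exists
  exact le_trans hk3.le (le_iSup₂_of_le (δ k) hk1 (le_iSup₂_of_le (y k) hk2 le_rfl))

theorem horizon_exists_seq {E : Type*} [NormedAddCommGroup E] [NormedSpace ℝ E]
    (g : E → EReal) (x : E) (hne : horizon g x ≠ ⊥) :
    ∃ (δ : ℕ → ℝ) (y : ℕ → E) (b : ℕ → ℝ),
      (∀ k : ℕ, ((k : ℝ) + 1) < δ k) ∧ (∀ k : ℕ, ‖x - y k‖ < 1 / ((k : ℝ) + 1)) ∧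
      (∀ k : ℕ, (b k : EReal) < (((δ k)⁻¹ : ℝ) : EReal) * g (δ k • y k)) ∧
      (∀ b' : ℝ, (b' : EReal) < horizon g x → ∀ᶠ k in atTop, b' < b k) := by
  set c := horizon g x with hc
  set b : ℕ → ℝ := fun k => if c = ⊤ then (k : ℝ) else c.toReal - 1 / ((k : ℝ) + 1) with hbdef
  have hblt : ∀ k, (b k : EReal) < c := by
    intro k
    by_cases htop : c = ⊤
    · simp [hbdef, htop]
      exact_mod_cast EReal.coe_lt_top (k : ℝ)
    · have hcr : c = ((c.toReal : ℝ) : EReal) := (EReal.coe_toReal htop hne).symm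
      simp only [hbdef, if_neg htop]
      rw [hcr]
      rw [EReal.coe_lt_coe_iff, EReal.toReal_coe]
      have : (0:ℝ) < 1 / ((k : ℝ) + 1) := by positivity
      linarith
  have hex : ∀ k : ℕ, ∃ (δ : ℝ) (y : E), ((k : ℝ) + 1) < δ ∧ ‖x - y‖ < 1 / ((k : ℝ) + 1) ∧
      (b k : EReal) < (((δ)⁻¹ : ℝ) : EReal) * g (δ • y) := by
    intro k
    have h1 : (b k : EReal) < ⨆ (δ : ℝ) (_ : ((k : ℝ) + 1) < δ) (y : E)
        (_ : ‖x - y‖ < 1 / ((k : ℝ) + 1)), ((δ⁻¹ : ℝ) : EReal) * g (δ • y) :=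
      lt_of_lt_of_le (hblt k) (iInf_le _ k)
    simp only [lt_iSup_iff] at h1
    obtain ⟨δ, hδ, y, hy, hlt⟩ := h1
    exact ⟨δ, y, hδ, hy, hlt⟩
  choose δ y hδ hy hlt using hex
  refine ⟨δ, y, b, hδ, hy, hlt, fun b' hb' => ?_⟩
  by_cases htop : c = ⊤
  · have : ∀ᶠ k : ℕ in atTop, b' < (k : ℝ) := by
      obtain ⟨N, hN⟩ := exists_nat_gt b'
      filter_upwards [eventually_ge_atTop N] with k hk
      exact lt_of_lt_of_le hN (by exact_mod_cast hk)
    filter_upwards [this] with k hk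
    simpa [hbdef, htop] using hk
  · have hb'r : b' < c.toReal := by
      have hcr : c = ((c.toReal : ℝ) : EReal) := (EReal.coe_toReal htop hne).symm
      rw [hcr] at hb'
      exact_mod_cast hb'
    have : Tendsto (fun k : ℕ => c.toReal - 1 / ((k : ℝ) + 1)) atTop (nhds (c.toReal - 0)) :=
      Tendsto.const_sub _ tendsto_one_div_add_atTop_nhds_zero_nat
    rw [sub_zero] at this
    filter_upwards [this.eventually (eventually_gt_nhds hb'r)] with k hk
    simpa [hbdef, htop] using hk

theorem level_bounded {E F : Type*} [NormedAddCommGroup E] [NormedSpace ℝ E]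
    [NormedAddCommGroup F] [NormedSpace ℝ F] [ProperSpace F]
    (f : E × F → EReal) (hnt : ∀ z, f z ≠ ⊤)
    (hK : ∀ x : F, (0 : EReal) ≤ horizon f ((0 : E), x) → x = 0)
    (α r : ℝ) :
    ∃ R : ℝ, ∀ (u : E) (x : F), ‖u‖ ≤ r → (α : EReal) ≤ f (u, x) → ‖x‖ ≤ R := by
  by_contra h
  push_neg at h
  have hex : ∀ k : ℕ, ∃ (u : E) (x : F), ‖u‖ ≤ r ∧ (α : EReal) ≤ f (u, x) ∧ (k : ℝ) + 1 < ‖x‖ := by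
    intro k
    obtain ⟨u, x, hu, hα, hx⟩ := h ((k : ℝ) + 1)
    exact ⟨u, x, hu, hα, hx⟩
  choose u x hu hα hx using hex
  set ρ : ℕ → ℝ := fun k => ‖x k‖ with hρ
  have hρk : ∀ k : ℕ, (k : ℝ) + 1 ≤ ρ k := fun k => (hx k).le
  have hρpos : ∀ k, 0 < ρ k := fun k => lt_of_lt_of_le (by positivity) (hρk k)
  set w : ℕ → F := fun k => (ρ k)⁻¹ • x k with hw
  have hw1 : ∀ k, ‖w k‖ = 1 := by
    intro k
    rw [hw]
    simp only [norm_smul, norm_inv, Real.norm_eq_abs, abs_of_pos (hρpos k)]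
    exact inv_mul_cancel₀ (hρpos k).ne'
  obtain ⟨xbar, -, φ, hφ, hconv⟩ :=
    tendsto_subseq_of_bounded (Metric.isBounded_closedBall (x := (0 : F)) (r := 1))
      (fun k => by rw [Metric.mem_closedBall, dist_zero_right, hw1 k])
  have hxbar : ‖xbar‖ = 1 := by
    have h1 : Tendsto (fun k => ‖(w ∘ φ) k‖) atTop (nhds ‖xbar‖) := hconv.norm
    have h2 : Tendsto (fun k : ℕ => ‖(w ∘ φ) k‖) atTop (nhds 1) := by
      simp only [Function.comp_apply, hw1]
      exact tendsto_const_nhds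
    exact tendsto_nhds_unique h1 h2
  have hφk : ∀ k : ℕ, (k : ℝ) + 1 ≤ ρ (φ k) :=
    fun k => le_trans (by exact_mod_cast Nat.succ_le_succ (hφ.le_apply)) (hρk (φ k))
  have hmain : (0 : EReal) ≤ horizon f ((0 : E), xbar) := by
    refine le_horizon_of_seq f ((0 : E), xbar) (fun k => ρ (φ k))
      (fun k => ((ρ (φ k))⁻¹ • u (φ k), w (φ k))) 0 ?_ ?_ ?_
    · refine tendsto_atTop_mono (fun k => le_trans (by linarith) (hφk k)) tendsto_natCast_atTop_atTop
    · refine Tendsto.prodMk_nhds ?_ hconv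
      refine squeeze_zero_norm (a := fun k : ℕ => |r| * (1 / ((k : ℝ) + 1))) (fun k => ?_) ?_
      · rw [norm_smul, norm_inv, Real.norm_eq_abs, abs_of_pos (hρpos (φ k))]
        have h1 : (ρ (φ k))⁻¹ ≤ 1 / ((k : ℝ) + 1) := by
          rw [one_div]
          exact inv_anti₀ (by positivity) (hφk k)
        have h2 : ‖u (φ k)‖ ≤ |r| := le_trans (hu (φ k)) (le_abs_self r)
        calc (ρ (φ k))⁻¹ * ‖u (φ k)‖ = ‖u (φ k)‖ * (ρ (φ k))⁻¹ := mul_comm _ _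
          _ ≤ |r| * (1 / ((k : ℝ) + 1)) :=
            mul_le_mul h2 h1 (inv_nonneg.2 (hρpos (φ k)).le) (abs_nonneg r)
      · have := tendsto_one_div_add_atTop_nhds_zero_nat.const_mul |r|
        simpa using this
    · intro b hb
      have hb0 : b < 0 := by exact_mod_cast hb
      have hev : ∀ᶠ k : ℕ in atTop, |α| * (1 / ((k : ℝ) + 1)) < -b := by
        have := tendsto_one_div_add_atTop_nhds_zero_nat.const_mul |α|
        simp only [mul_zero] at this
        exact this.eventually (eventually_lt_nhds (by linarith))
      filter_upwards [hev] with k hk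
      have hsm : ρ (φ k) • ((ρ (φ k))⁻¹ • u (φ k), w (φ k)) = (u (φ k), x (φ k)) := by
        rw [Prod.smul_mk, smul_inv_smul₀ (hρpos (φ k)).ne', hw, smul_inv_smul₀ (hρpos (φ k)).ne']
      rw [hsm]
      set v := f (u (φ k), x (φ k)) with hv
      have hvne : v ≠ ⊥ := fun hbot => by
        rw [hv] at hbot
        exact absurd (hα (φ k)) (by simp [hbot])
      have hvr : v = ((v.toReal : ℝ) : EReal) := (EReal.coe_toReal (hnt _) hvne).symm
      have hαv : α ≤ v.toReal := by
        have h3 := hα (φ k)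
        rw [← hv, hvr] at h3
        exact_mod_cast h3
      rw [hvr, ← EReal.coe_mul, EReal.coe_lt_coe_iff]
      have hinv : (ρ (φ k))⁻¹ ≤ 1 / ((k : ℝ) + 1) := by
        rw [one_div]
        exact inv_anti₀ (by positivity) (hφk k)
      have hinvpos : (0 : ℝ) < (ρ (φ k))⁻¹ := inv_pos.2 (hρpos (φ k))
      have h1 : (ρ (φ k))⁻¹ * α ≤ (ρ (φ k))⁻¹ * v.toReal :=
        mul_le_mul_of_nonneg_left hαv hinvpos.le
      have h2 : -(|α| * (1 / ((k : ℝ) + 1))) ≤ (ρ (φ k))⁻¹ * α := by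
        have : |(ρ (φ k))⁻¹ * α| ≤ |α| * (1 / ((k : ℝ) + 1)) := by
          rw [abs_mul, abs_of_pos hinvpos, mul_comm]
          exact mul_le_mul_of_nonneg_left hinv (abs_nonneg α)
        linarith [neg_abs_le ((ρ (φ k))⁻¹ * α)]
      linarith
  exact absurd (congrArg norm (hK xbar hmain)) (by rw [hxbar]; simp)

section Claims

variable {E F : Type*} [NormedAddCommGroup E] [NormedSpace ℝ E]
    [NormedAddCommGroup F] [NormedSpace ℝ F] [ProperSpace F]
    (f : E × F → EReal) (hnt : ∀ z, f z ≠ ⊤) (husc : UpperSemicontinuous f)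
    (hK : ∀ x : F, (0 : EReal) ≤ horizon f ((0 : E), x) → x = 0)

include hnt husc hK

theorem sup_ne_top : ∀ u : E, (⨆ x, f (u, x)) ≠ ⊤ := by
  intro u h
  obtain ⟨R, hR⟩ := level_bounded f hnt hK 0 ‖u‖
  have hex : ∀ k : ℕ, ∃ xk : F, ((k : ℝ) : EReal) < f (u, xk) := by
    intro k
    have : ((k : ℝ) : EReal) < ⨆ x, f (u, x) := by rw [h]; exact EReal.coe_lt_top _
    exact lt_iSup_iff.1 this
  choose xs hxs using hex
  have hb : ∀ k, ‖xs k‖ ≤ R := by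
    intro k
    refine hR u (xs k) le_rfl (le_trans ?_ (hxs k).le)
    exact EReal.coe_le_coe_iff.2 (Nat.cast_nonneg k)
  obtain ⟨xbar, -, φ, hφ, hconv⟩ :=
    tendsto_subseq_of_bounded (Metric.isBounded_closedBall (x := (0 : F)) (r := R))
      (fun k => by rw [Metric.mem_closedBall, dist_zero_right]; exact hb k)
  obtain ⟨M, hM1, -⟩ := EReal.exists_between_coe_real (lt_top_iff_ne_top.2 (hnt (u, xbar)))
  have hev := (tendsto_const_nhds.prodMk_nhds hconv).eventually (husc (u, xbar) (M : EReal) hM1)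
  obtain ⟨N, hN⟩ := exists_nat_gt M
  obtain ⟨k, hk1, hk2⟩ := (hev.and (eventually_ge_atTop N)).exists
  have h1 : ((φ k : ℝ) : EReal) < f (u, xs (φ k)) := hxs (φ k)
  have h2 : f (u, xs (φ k)) < (M : EReal) := hk1
  have h3 : M < (φ k : ℝ) := lt_of_lt_of_le hN (by exact_mod_cast le_trans hk2 hφ.le_apply)
  have := lt_trans (lt_trans h1 h2) (EReal.coe_lt_coe_iff.2 h3)
  exact lt_irrefl _ this

theorem sup_attained : ∀ u : E, (⨆ x, f (u, x)) ≠ ⊥ → ∃ xu, f (u, xu) = ⨆ x, f (u, x) := by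
  intro u hbot
  set c := ⨆ x, f (u, x) with hc
  have hcr : c = ((c.toReal : ℝ) : EReal) := (EReal.coe_toReal (sup_ne_top f hnt husc hK u) hbot).symm
  obtain ⟨R, hR⟩ := level_bounded f hnt hK (c.toReal - 1) ‖u‖
  have hex : ∀ k : ℕ, ∃ xk : F, ((c.toReal - 1 / ((k : ℝ) + 1) : ℝ) : EReal) < f (u, xk) := by
    intro k
    refine lt_iSup_iff.1 ?_
    rw [← hc, hcr]
    have h0 : (0:ℝ) < 1 / ((k:ℝ)+1) := by positivity
    have h1 : c.toReal - 1 / ((k:ℝ)+1) < c.toReal := by linarith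
    exact_mod_cast h1
  choose xs hxs using hex
  have hb : ∀ k, ‖xs k‖ ≤ R := by
    intro k
    refine hR u (xs k) le_rfl (le_trans (EReal.coe_le_coe_iff.2 ?_) (hxs k).le)
    have h1 : 1 / ((k:ℝ)+1) ≤ 1 := by
      rw [div_le_one (by positivity)]; linarith [Nat.cast_nonneg (α := ℝ) k]
    linarith
  obtain ⟨xbar, -, φ, hφ, hconv⟩ :=
    tendsto_subseq_of_bounded (Metric.isBounded_closedBall (x := (0 : F)) (r := R))
      (fun k => by rw [Metric.mem_closedBall, dist_zero_right]; exact hb k)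
  refine ⟨xbar, le_antisymm (le_iSup (fun x => f (u, x)) xbar) ?_⟩
  by_contra hlt
  push_neg at hlt
  obtain ⟨M, hM1, hM2⟩ := EReal.exists_between_coe_real hlt
  have hev := (tendsto_const_nhds.prodMk_nhds hconv).eventually (husc (u, xbar) (M : EReal) hM1)
  have hMc : M < c.toReal := by rw [hcr] at hM2; exact_mod_cast hM2
  have htd : Tendsto (fun k : ℕ => c.toReal - 1 / ((k : ℝ) + 1)) atTop (nhds (c.toReal - 0)) :=
    Tendsto.const_sub _ tendsto_one_div_add_atTop_nhds_zero_nat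
  rw [sub_zero] at htd
  obtain ⟨k, hk1, hk2⟩ := (hev.and (htd.eventually (eventually_gt_nhds hMc))).exists
  have h1 : ((c.toReal - 1 / ((φ k : ℝ) + 1) : ℝ) : EReal) < f (u, xs (φ k)) := hxs (φ k)
  have h2 : f (u, xs (φ k)) < (M : EReal) := hk1
  have h3 : M < c.toReal - 1 / ((φ k : ℝ) + 1) := by
    have hmono : 1 / ((φ k : ℝ) + 1) ≤ 1 / ((k : ℝ) + 1) := by
      apply one_div_le_one_div_of_le (by positivity)
      have hkk : (k:ℝ) ≤ (φ k : ℝ) := Nat.cast_le.2 hφ.le_apply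
      linarith
    linarith
  exact lt_irrefl _ (lt_trans (lt_trans (EReal.coe_lt_coe_iff.2 h3) h1) h2)

theorem sup_usc : UpperSemicontinuous (fun u : E => ⨆ x, f (u, x)) := by
  intro u M hM
  by_contra h
  have hseq : ∀ k : ℕ, ∃ u' : E, dist u' u < 1 / ((k : ℝ) + 1) ∧ M ≤ ⨆ x, f (u', x) := by
    intro k
    by_contra hco
    push_neg at hco
    exact h (Metric.eventually_nhds_iff.2
      ⟨1 / ((k : ℝ) + 1), by positivity, fun y hy => hco y hy⟩)
  choose us hud hup using hseq
  obtain ⟨β, hβ1, hβ2⟩ := EReal.exists_between_coe_real hM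
  have hex : ∀ k : ℕ, ∃ xk : F, (β : EReal) < f (us k, xk) :=
    fun k => lt_iSup_iff.1 (lt_of_lt_of_le hβ2 (hup k))
  choose xs hxs using hex
  obtain ⟨R, hR⟩ := level_bounded f hnt hK β (‖u‖ + 1)
  have hb : ∀ k, ‖xs k‖ ≤ R := by
    intro k
    refine hR (us k) (xs k) ?_ (hxs k).le
    calc ‖us k‖ ≤ ‖u‖ + dist (us k) u := by
          rw [dist_eq_norm]
          calc ‖us k‖ = ‖u + (us k - u)‖ := by congr 1; abel
            _ ≤ ‖u‖ + ‖us k - u‖ := norm_add_le _ _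
      _ ≤ ‖u‖ + 1 := by
          have h1 : dist (us k) u ≤ 1 := le_trans (hud k).le (by
            rw [div_le_one (by positivity)]
            linarith [Nat.cast_nonneg (α := ℝ) k])
          linarith
  obtain ⟨xbar, -, φ, hφ, hconv⟩ :=
    tendsto_subseq_of_bounded (Metric.isBounded_closedBall (x := (0 : F)) (r := R))
      (fun k => by rw [Metric.mem_closedBall, dist_zero_right]; exact hb k)
  have husu : Tendsto (us ∘ φ) atTop (nhds u) := by
    rw [tendsto_iff_dist_tendsto_zero]
    refine squeeze_zero (g := fun k : ℕ => 1 / ((φ k : ℝ) + 1)) (fun k => dist_nonneg)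
      (fun k => (hud (φ k)).le) ?_
    · have hmono : ∀ k : ℕ, 1 / ((φ k : ℝ) + 1) ≤ 1 / ((k : ℝ) + 1) := by
        intro k
        apply one_div_le_one_div_of_le (by positivity)
        have hkk : (k : ℝ) ≤ (φ k : ℝ) := Nat.cast_le.2 hφ.le_apply
        linarith
      exact squeeze_zero (fun k => by positivity) hmono tendsto_one_div_add_atTop_nhds_zero_nat
  have hfle : f (u, xbar) < (β : EReal) :=
    lt_of_le_of_lt (le_iSup (fun x => f (u, x)) xbar) hβ1
  have hev := (husu.prodMk_nhds hconv).eventually (husc (u, xbar) (β : EReal) hfle)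
  obtain ⟨k, hk⟩ := hev.exists
  exact lt_irrefl _ (lt_trans (hxs (φ k)) hk)

omit hnt husc hK in
theorem horizon_sup_ge (u : E) (x : F) :
    horizon f (u, x) ≤ horizon (fun u' : E => ⨆ x', f (u', x')) u := by
  refine iInf_mono fun N => ?_
  refine iSup₂_le fun δ hδ => iSup₂_le fun y hy => ?_
  have hδ0 : (0 : ℝ) < δ := lt_trans (by positivity) hδ
  refine le_iSup₂_of_le δ hδ (le_iSup₂_of_le y.1 ?_ ?_)
  · refine lt_of_le_of_lt ?_ hy
    have h1 : ((u, x) - y).1 = u - y.1 := rfl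
    calc ‖u - y.1‖ = ‖((u, x) - y).1‖ := by rw [h1]
      _ ≤ ‖(u, x) - y‖ := norm_fst_le _
  · refine mul_le_mul_of_nonneg_left ?_ (by exact_mod_cast EReal.coe_nonneg.2 (inv_nonneg.2 hδ0.le))
    have h2 : δ • y = (δ • y.1, δ • y.2) := rfl
    rw [h2]
    exact le_iSup (fun x' => f (δ • y.1, x')) (δ • y.2)

theorem horizon_sup_le (u : E)
    (hne : horizon (fun u' : E => ⨆ x, f (u', x)) u ≠ ⊥) :
    ∃ xbar : F, horizon (fun u' : E => ⨆ x, f (u', x)) u ≤ horizon f (u, xbar) := by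
  set p : E → EReal := fun u' => ⨆ x, f (u', x) with hp
  set c := horizon p u with hcdef
  obtain ⟨δ, y, b, hδ, hy, hlt, hbev⟩ := horizon_exists_seq p u hne
  have hδpos : ∀ k, 0 < δ k := fun k => lt_trans (by positivity) (hδ k)
  have hδ1 : ∀ k, 1 ≤ δ k := fun k => le_of_lt (lt_of_le_of_lt (by
    simp only [le_add_iff_nonneg_left]; positivity) (hδ k))
  have hpb : ∀ k, p (δ k • y k) ≠ ⊥ := by
    intro k hb
    have := hlt k
    rw [hb, EReal.coe_mul_bot_of_pos (inv_pos.2 (hδpos k))] at this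
    exact not_lt_bot this
  have hpr : ∀ k, p (δ k • y k) = (((p (δ k • y k)).toReal : ℝ) : EReal) :=
    fun k => (EReal.coe_toReal (sup_ne_top f hnt husc hK (δ k • y k)) (hpb k)).symm
  set r : ℕ → ℝ := fun k => (p (δ k • y k)).toReal with hrdef
  have hatt : ∀ k : ℕ, ∃ xk : F, f (δ k • y k, xk) = p (δ k • y k) :=
    fun k => sup_attained f hnt husc hK (δ k • y k) (hpb k)
  choose xs hxs using hatt
  have hfx : ∀ k, f (δ k • y k, xs k) = ((r k : ℝ) : EReal) := fun k => (hxs k).trans (hpr k)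
  have hrb : ∀ k, b k < (δ k)⁻¹ * r k := by
    intro k
    have := hlt k
    rw [hpr k, ← EReal.coe_mul] at this
    exact_mod_cast this
  have hyu : Tendsto y atTop (nhds u) := by
    rw [tendsto_iff_dist_tendsto_zero]
    refine squeeze_zero (fun k => dist_nonneg) (fun k => ?_)
      tendsto_one_div_add_atTop_nhds_zero_nat
    rw [dist_eq_norm, norm_sub_rev]
    exact (hy k).le
  by_cases hcase : ∃ M : ℝ, ∃ᶠ k in atTop, ‖(δ k)⁻¹ • xs k‖ ≤ M
  · -- bounded subsequence case
    obtain ⟨M, hfreq⟩ := hcase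
    obtain ⟨φ, hφ, hφM⟩ := Filter.extraction_of_frequently_atTop hfreq
    obtain ⟨xbar, -, ψ, hψ, hconv⟩ :=
      tendsto_subseq_of_bounded (Metric.isBounded_closedBall (x := (0 : F)) (r := M))
        (x := fun k => (δ (φ k))⁻¹ • xs (φ k))
        (fun k => by rw [Metric.mem_closedBall, dist_zero_right]; exact hφM k)
    set σ : ℕ → ℕ := φ ∘ ψ with hσ
    have hσmono : StrictMono σ := hφ.comp hψ
    refine ⟨xbar, ?_⟩
    refine le_horizon_of_seq f (u, xbar) (fun k => δ (σ k))
      (fun k => (y (σ k), (δ (σ k))⁻¹ • xs (σ k))) c ?_ ?_ ?_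
    · refine tendsto_atTop_mono (fun k => ?_) tendsto_natCast_atTop_atTop
      have h1 : (k : ℝ) ≤ (σ k : ℝ) := Nat.cast_le.2 hσmono.le_apply
      linarith [hδ (σ k)]
    · exact (hyu.comp hσmono.tendsto_atTop).prodMk_nhds hconv
    · intro b' hb'
      have hev := (hσmono.tendsto_atTop).eventually (hbev b' hb')
      filter_upwards [hev] with k hk
      have hsm : δ (σ k) • (y (σ k), (δ (σ k))⁻¹ • xs (σ k)) = (δ (σ k) • y (σ k), xs (σ k)) := by
        have : δ (σ k) • ((δ (σ k))⁻¹ • xs (σ k)) = xs (σ k) :=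
          smul_inv_smul₀ (hδpos (σ k)).ne' _
        exact Prod.ext rfl this
      rw [hsm, hfx (σ k), ← EReal.coe_mul]
      exact lt_trans (EReal.coe_lt_coe_iff.2 hk) (EReal.coe_lt_coe_iff.2 (hrb (σ k)))
  · -- unbounded case: contradiction with hK
    exfalso
    push_neg at hcase
    have hw : Tendsto (fun k => ‖(δ k)⁻¹ • xs k‖) atTop atTop := by
      refine tendsto_atTop.2 fun M => ?_
      have := hcase M
      filter_upwards [this] with k hk
      exact hk.le
    set wn : ℕ → ℝ := fun k => ‖(δ k)⁻¹ • xs k‖ with hwn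
    have hwnval : ∀ k, wn k = (δ k)⁻¹ * ‖xs k‖ := by
      intro k
      show ‖(δ k)⁻¹ • xs k‖ = (δ k)⁻¹ * ‖xs k‖
      rw [norm_smul, norm_inv, Real.norm_eq_abs, abs_of_pos (hδpos k)]
    set ρ : ℕ → ℝ := fun k => ‖xs k‖ with hρ
    have hρval : ∀ k, ρ k = δ k * wn k := by
      intro k
      rw [hwnval k, ← mul_assoc, mul_inv_cancel₀ (hδpos k).ne', one_mul]
    have hρtop : Tendsto ρ atTop atTop := by
      refine tendsto_atTop_mono (fun k => ?_) hw
      rw [hρval k]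
      exact le_mul_of_one_le_left (norm_nonneg _) (hδ1 k)
    set w' : ℕ → F := fun k => if ρ k = 0 then 0 else (ρ k)⁻¹ • xs k with hw'
    have hw'one : ∀ k, ρ k ≠ 0 → ‖w' k‖ = 1 := by
      intro k hk
      have hkpos : 0 < ρ k := lt_of_le_of_ne (norm_nonneg _) (Ne.symm hk)
      rw [hw']
      simp only [if_neg hk, norm_smul, norm_inv, Real.norm_eq_abs, abs_of_pos hkpos]
      exact inv_mul_cancel₀ hk
    have hw'le : ∀ k, ‖w' k‖ ≤ 1 := by
      intro k
      by_cases hk : ρ k = 0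
      · rw [hw']; simp [hk]
      · exact (hw'one k hk).le
    obtain ⟨xbar, -, φ, hφ, hconv⟩ :=
      tendsto_subseq_of_bounded (Metric.isBounded_closedBall (x := (0 : F)) (r := 1))
        (x := w') (fun k => by rw [Metric.mem_closedBall, dist_zero_right]; exact hw'le k)
    have hρφ : Tendsto (fun k => ρ (φ k)) atTop atTop := hρtop.comp hφ.tendsto_atTop
    have hρφpos : ∀ᶠ k in atTop, 0 < ρ (φ k) := hρφ.eventually_gt_atTop 0
    have hwφ : Tendsto (fun k => wn (φ k)) atTop atTop := hw.comp hφ.tendsto_atTop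
    have hxbar1 : ‖xbar‖ = 1 := by
      have h2 : Tendsto (fun k => ‖(w' ∘ φ) k‖) atTop (nhds 1) := by
        refine Tendsto.congr' ?_ tendsto_const_nhds
        filter_upwards [hρφpos] with k hk
        exact (hw'one (φ k) hk.ne').symm
      exact tendsto_nhds_unique hconv.norm h2
    obtain ⟨b₀, hb₀1, hb₀2⟩ := EReal.exists_between_coe_real (bot_lt_iff_ne_bot.2 hne)
    set B : ℝ := min b₀ 0 with hB
    have hBw : Tendsto (fun k => B / wn (φ k)) atTop (nhds 0) :=
      Tendsto.div_atTop tendsto_const_nhds hwφ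
    have hmain : (0 : EReal) ≤ horizon f ((0 : E), xbar) := by
      refine le_horizon_of_seq f ((0 : E), xbar) (fun k => ρ (φ k))
        (fun k => ((ρ (φ k))⁻¹ • (δ (φ k) • y (φ k)), w' (φ k))) 0 hρφ ?_ ?_
      · refine Tendsto.prodMk_nhds ?_ hconv
        refine squeeze_zero_norm' (a := fun k => (‖u‖ + 1) / wn (φ k)) ?_
          (Tendsto.div_atTop tendsto_const_nhds hwφ)
        have hyb : ∀ᶠ k in atTop, ‖y (φ k)‖ ≤ ‖u‖ + 1 := by
          have := (hyu.comp hφ.tendsto_atTop).norm.eventually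
            (eventually_le_nhds (show ‖u‖ < ‖u‖ + 1 by linarith))
          exact this
        filter_upwards [hρφpos, hyb, hwφ.eventually_ge_atTop 1] with k hk hyk hwk
        have hwkpos : 0 < wn (φ k) := lt_of_lt_of_le zero_lt_one hwk
        have heq : ‖(ρ (φ k))⁻¹ • (δ (φ k) • y (φ k))‖ = ‖y (φ k)‖ / wn (φ k) := by
          rw [norm_smul, norm_smul, norm_inv, Real.norm_eq_abs, Real.norm_eq_abs,
            abs_of_pos hk, abs_of_pos (hδpos (φ k)), hρval (φ k), mul_inv]
          have hδne : (δ (φ k) : ℝ) ≠ 0 := (hδpos (φ k)).ne'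
          field_simp
        rw [heq]
        exact div_le_div_of_nonneg_right hyk hwkpos.le
      · intro b' hb'
        have hb'0 : b' < 0 := by exact_mod_cast hb'
        have hbφ : ∀ᶠ k in atTop, b₀ < b (φ k) :=
          hφ.tendsto_atTop.eventually (hbev b₀ hb₀2)
        have hBb' : ∀ᶠ k in atTop, b' < B / wn (φ k) :=
          hBw.eventually (eventually_gt_nhds hb'0)
        filter_upwards [hρφpos, hbφ, hBb', hwφ.eventually_ge_atTop 1] with k hρk hbk hBk hwk
        have hwkpos : 0 < wn (φ k) := lt_of_lt_of_le zero_lt_one hwk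
        have hsm : ρ (φ k) • ((ρ (φ k))⁻¹ • (δ (φ k) • y (φ k)), w' (φ k))
            = (δ (φ k) • y (φ k), xs (φ k)) := by
          have h1 : ρ (φ k) • (ρ (φ k))⁻¹ • (δ (φ k) • y (φ k)) = δ (φ k) • y (φ k) :=
            smul_inv_smul₀ hρk.ne' _
          have h2 : ρ (φ k) • w' (φ k) = xs (φ k) := by
            rw [hw']
            simp only [if_neg hρk.ne']
            exact smul_inv_smul₀ hρk.ne' _
          exact Prod.ext h1 h2
        rw [hsm, hfx (φ k), ← EReal.coe_mul, EReal.coe_lt_coe_iff]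
        have h3 : B < (δ (φ k))⁻¹ * r (φ k) :=
          lt_of_le_of_lt (min_le_left _ _) (lt_trans hbk (hrb (φ k)))
        have h4 : (ρ (φ k))⁻¹ * r (φ k) = ((δ (φ k))⁻¹ * r (φ k)) / wn (φ k) := by
          rw [hρval (φ k)]
          field_simp
        have key : B / wn (φ k) < (ρ (φ k))⁻¹ * r (φ k) := by
          rw [h4]
          exact div_lt_div_of_pos_right h3 hwkpos
        exact lt_trans hBk key
    exact absurd (congrArg norm (hK xbar hmain)) (by rw [hxbar1]; simp)

end Claims

/-- Proposition 4.3 (Rockafellar–Wets 3.31 & 1.17): parametric maximization under a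
horizon (level-boundedness) condition. -/
theorem parametric_maximization
    {m n : ℕ}
    (f : EuclideanSpace ℝ (Fin m) × EuclideanSpace ℝ (Fin n) → EReal)
    (hnt : ∀ z, f z ≠ ⊤)
    (hproper : ∃ z, f z ≠ ⊥)
    (husc : UpperSemicontinuous f)
    (hK : {x : EuclideanSpace ℝ (Fin n) | 0 ≤ horizon f ((0 : EuclideanSpace ℝ (Fin m)), x)}
      = {0}) :
    (∃ u, (⨆ x, f (u, x)) ≠ ⊥) ∧
    (∀ u, (⨆ x, f (u, x)) ≠ ⊤) ∧
    UpperSemicontinuous (fun u : EuclideanSpace ℝ (Fin m) => ⨆ x, f (u, x)) ∧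
    (∀ u, (⨆ x, f (u, x)) ≠ ⊥ → ∃ xu, f (u, xu) = ⨆ x, f (u, x)) ∧
    (∀ u, horizon (fun u' : EuclideanSpace ℝ (Fin m) => ⨆ x, f (u', x)) u =
      ⨆ x, horizon f (u, x)) ∧
    (∀ u, horizon (fun u' : EuclideanSpace ℝ (Fin m) => ⨆ x, f (u', x)) u ≠ ⊥ →
      ∃ xu, horizon f (u, xu) = ⨆ x, horizon f (u, x)) := by
  have hK' : ∀ x : EuclideanSpace ℝ (Fin n),
      (0 : EReal) ≤ horizon f ((0 : EuclideanSpace ℝ (Fin m)), x) → x = 0 := by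
    intro x hx
    have h := Set.ext_iff.1 hK x
    simpa using h.1 hx
  refine ⟨?_, sup_ne_top f hnt husc hK', sup_usc f hnt husc hK',
    sup_attained f hnt husc hK', ?_, ?_⟩
  · obtain ⟨z, hz⟩ := hproper
    refine ⟨z.1, fun h => hz ?_⟩
    have h1 : f (z.1, z.2) ≤ ⨆ x, f (z.1, x) := le_iSup (fun x => f (z.1, x)) z.2
    rw [h] at h1
    simpa using le_bot_iff.1 h1
  · intro u
    refine le_antisymm ?_ (iSup_le fun x => horizon_sup_ge f u x)
    by_cases hb : horizon (fun u' : EuclideanSpace ℝ (Fin m) => ⨆ x, f (u', x)) u = ⊥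
    · rw [hb]; exact bot_le
    · obtain ⟨xbar, hx⟩ := horizon_sup_le f hnt husc hK' u hb
      exact le_trans hx (le_iSup (fun x => horizon f (u, x)) xbar)
  · intro u hb
    obtain ⟨xbar, hx⟩ := horizon_sup_le f hnt husc hK' u hb
    refine ⟨xbar, le_antisymm (le_iSup (fun x => horizon f (u, x)) xbar) ?_⟩
    exact le_trans (iSup_le fun x => horizon_sup_ge f u x) hx

end
end

section
/- Let f : ℝ → ℝ be upper semicontinuous with f(0) = 0, f^∞(0) = 0 and f^∞(x) < 0 for all x ≠ 0, and let g : ℝ → ℝ be continuous and positively homogeneous (g(λx) = λg(x) for all λ ≥ 0 and x ∈ ℝ) with f^∞(x) < g(x) < 0 for all x ≠ 0. Then there exists a ∈ ℝ such that f(x) ≤ a + g(x) for all x ∈ ℝ. -/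
open scoped ENNReal

noncomputable section

private lemma horizon_key (f g : ℝ → ℝ) (y : ℝ)
    (h : horizon (fun y : ℝ => (f y : EReal)) y < (g y : EReal)) :
    ∃ R : ℝ, 0 ≤ R ∧ ∀ δ : ℝ, R < δ → f (δ * y) < δ * g y := by
  rw [horizon] at h
  obtain ⟨n, hn⟩ := iInf_lt_iff.mp h
  refine ⟨(n : ℝ) + 1, by positivity, fun δ hδ => ?_⟩
  have hδ0 : (0 : ℝ) < δ := lt_of_le_of_lt (by positivity) hδ
  have hle : ((δ⁻¹ : ℝ) : EReal) * ((f (δ • y) : ℝ) : EReal) ≤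
      ⨆ (δ : ℝ) (_ : ((n : ℝ) + 1) < δ) (z : ℝ) (_ : ‖y - z‖ < 1 / ((n : ℝ) + 1)),
        ((δ⁻¹ : ℝ) : EReal) * ((f (δ • z) : ℝ) : EReal) := by
    refine le_iSup_of_le δ ?_
    refine le_iSup_of_le hδ ?_
    refine le_iSup_of_le y ?_
    refine le_iSup_of_le (by simp; positivity) le_rfl
  have hlt' : ((δ⁻¹ * f (δ • y) : ℝ) : EReal) < ((g y : ℝ) : EReal) := by
    rw [EReal.coe_mul]
    exact lt_of_le_of_lt hle hn
  have hR : δ⁻¹ * f (δ * y) < g y := by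
    have := EReal.coe_lt_coe_iff.mp hlt'
    simpa [smul_eq_mul] using this
  have := mul_lt_mul_of_pos_left hR hδ0
  rwa [mul_inv_cancel_left₀ (ne_of_gt hδ0)] at this

private lemma usc_bdd (f : ℝ → ℝ) (hf : UpperSemicontinuous f) (K : Set ℝ)
    (hK : IsCompact K) : ∃ M : ℝ, ∀ x ∈ K, f x ≤ M := by
  have hopen : ∀ n : ℕ, IsOpen {x : ℝ | f x < (n : ℝ)} := fun n =>
    upperSemicontinuous_iff_isOpen_preimage.mp hf (n : ℝ)
  have hcover : K ⊆ ⋃ n : ℕ, {x : ℝ | f x < (n : ℝ)} := by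
    intro x _
    obtain ⟨n, hn⟩ := exists_nat_gt (f x)
    exact Set.mem_iUnion.mpr ⟨n, hn⟩
  obtain ⟨t, ht⟩ := hK.elim_finite_subcover _ hopen hcover
  refine ⟨((t.sup id : ℕ) : ℝ), fun x hx => ?_⟩
  obtain ⟨n, hn, hfx⟩ := Set.mem_iUnion₂.mp (ht hx)
  have : (n : ℝ) ≤ ((t.sup id : ℕ) : ℝ) := by
    exact_mod_cast Finset.le_sup (f := id) hn
  exact le_trans hfx.le this

/-- The domination estimate of Remark 2.8: an upper semicontinuous function whose horizon
function is dominated by a negative continuous positively homogeneous function is bounded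
above by a translate of the latter. -/
theorem dominated_by_translate_of_homogeneous
    (f : ℝ → ℝ) (hf : UpperSemicontinuous f) (hf0 : f 0 = 0)
    (hhor0 : horizon (fun y : ℝ => (f y : EReal)) 0 = 0)
    (hhorneg : ∀ x : ℝ, x ≠ 0 → horizon (fun y : ℝ => (f y : EReal)) x < 0)
    (g : ℝ → ℝ) (hg : Continuous g)
    (hhom : ∀ (c : ℝ), 0 ≤ c → ∀ x : ℝ, g (c * x) = c * g x)
    (hlt : ∀ x : ℝ, x ≠ 0 → horizon (fun y : ℝ => (f y : EReal)) x < (g x : EReal))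
    (hgneg : ∀ x : ℝ, x ≠ 0 → g x < 0) :
    ∃ a : ℝ, ∀ x : ℝ, f x ≤ a + g x := by
  obtain ⟨R1, hR1nn, hR1⟩ := horizon_key f g 1 (hlt 1 one_ne_zero)
  obtain ⟨R2, hR2nn, hR2⟩ := horizon_key f g (-1) (hlt (-1) (by norm_num))
  set R : ℝ := max R1 R2 with hRdef
  have hRnn : 0 ≤ R := le_trans hR1nn (le_max_left _ _)
  -- outside [-R, R], f x ≤ g x
  have houter : ∀ x : ℝ, R < |x| → f x ≤ g x := by
    intro x hx
    rcases lt_trichotomy x 0 with hneg | hzero | hpos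
    · have h2 : R2 < -x := lt_of_le_of_lt (le_max_right _ _) (by rwa [abs_of_neg hneg] at hx)
      have := hR2 (-x) h2
      have hxeq : (-x) * (-1 : ℝ) = x := by ring
      rw [hxeq] at this
      have hgx : g x = (-x) * g (-1) := by
        rw [← hhom (-x) (by linarith) (-1), hxeq]
      linarith [this, hgx.ge]
    · simp [hzero] at hx; exact absurd hx (not_lt.mpr hRnn)
    · have h1 : R1 < x := lt_of_le_of_lt (le_max_left _ _) (by rwa [abs_of_pos hpos] at hx)
      have := hR1 x h1
      rw [mul_one] at this
      have hgx : g x = x * g 1 := by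
        have := hhom x hpos.le 1
        rwa [mul_one] at this
      linarith
  -- f bounded above on [-R, R]
  obtain ⟨M, hM⟩ := usc_bdd f hf (Set.Icc (-R) R) isCompact_Icc
  -- g bounded below on [-R, R]
  obtain ⟨z, hz, hzmin⟩ := isCompact_Icc.exists_isMinOn (Set.nonempty_Icc.mpr (by linarith))
    (hg.continuousOn (s := Set.Icc (-R) R))
  refine ⟨max (M - g z) 0, fun x => ?_⟩
  rcases le_or_gt (|x|) R with hle | hgt
  · have hxmem : x ∈ Set.Icc (-R) R := by
      rw [Set.mem_Icc]
      constructor <;> [linarith [neg_abs_le x]; linarith [le_abs_self x]]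
    have h1 : f x ≤ M := hM x hxmem
    have h2 : g z ≤ g x := hzmin hxmem
    have h3 : M - g z ≤ max (M - g z) 0 := le_max_left _ _
    linarith
  · have h1 : f x ≤ g x := houter x hgt
    have h2 : (0:ℝ) ≤ max (M - g z) 0 := le_max_right _ _
    linarith

end
end
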